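/- arXiv:1611.04907 — 6 statements merged into one kernel-verified Lean document; each statement's English description precedes it below -/
import Mathlib

section
/- Let q ≥ 1. The map B carries the frontier of the open unit cube (−1,1)^q in ℝ^q onto the frontier of the invertible region D_θ; that is, B(∂D_ζ) = ∂D_θ, where D_ζ = (−1,1)^q and ∂ denotes the topological frontier in ℝ^q. -/
/-- Forward recursion for the Barndorff-Nielsen–Schou / Monahan transformation:
`fwdRow ζ k i = θ_{i,k}` (1-based), with `θ_{k,k} = ζ_k` and
`θ_{i,k} = θ_{i,k-1} - ζ_k * θ_{k-i,k-1}` for `1 ≤ i ≤ k-1`. -/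
noncomputable def fwdRow (ζ : ℕ → ℝ) : ℕ → ℕ → ℝ
  | 0 => fun _ => 0
  | (k+1) => fun i =>
      if i = k + 1 then ζ (k + 1)
      else fwdRow ζ k i - ζ (k + 1) * fwdRow ζ k (k + 1 - i)

open Classical in
/-- Reverse recursion: `(invAux q θ d).1` is row `q - d` (i.e. `θ_{·, q-d}`), and
`(invAux q θ d).2` is the proposition that `|θ_{j,j}| < 1` for all `j` with `q - d ≤ j ≤ q`.
Row `q-(d+1)` is given by `θ_{i,k-1} = (θ_{i,k} + θ_{k,k} θ_{k-i,k})/(1-θ_{k,k}^2)` with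
`k = q - d` when the diagonal condition holds at all levels `≥ k`, and is `0` otherwise. -/
noncomputable def invAux (q : ℕ) (θ : ℕ → ℝ) : ℕ → (ℕ → ℝ) × Prop
  | 0 => (θ, |θ q| < 1)
  | (d+1) =>
      let p := invAux q θ d
      let row : ℕ → ℝ := fun i =>
        if p.2 then (p.1 i + p.1 (q - d) * p.1 (q - d - i)) / (1 - (p.1 (q - d)) ^ 2)
        else 0
      (row, p.2 ∧ |row (q - d - 1)| < 1)

/-- Interpret a vector in `ℝ^q` as a 1-based sequence `ℕ → ℝ` (value `0` out of range). -/
def toSeq {q : ℕ} (v : Fin q → ℝ) : ℕ → ℝ :=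
  fun n => if h : n - 1 < q then v ⟨n - 1, h⟩ else 0

/-- The map `B : ℝ^q → ℝ^q`, `B(ζ)_i = θ_{i,q}`. -/
noncomputable def Bmap {q : ℕ} (ζ : Fin q → ℝ) : Fin q → ℝ :=
  fun i => fwdRow (toSeq ζ) q (i.1 + 1)

/-- The map `B⁻ : ℝ^q → ℝ^q`, `B⁻(θ)_i = θ_{i,i}` computed by the reverse recursion. -/
noncomputable def Binv {q : ℕ} (θ : Fin q → ℝ) : Fin q → ℝ :=
  fun i => (invAux q (toSeq θ) (q - (i.1 + 1))).1 (i.1 + 1)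

/-- The invertible region `D_θ ⊆ ℝ^q`: all complex roots of
`θ(z) = 1 - θ_1 z - ⋯ - θ_q z^q` satisfy `|z| > 1`. -/
def invRegion (q : ℕ) : Set (Fin q → ℝ) :=
  {θ | ∀ z : ℂ, 1 - ∑ i : Fin q, (θ i : ℂ) * z ^ (i.1 + 1) = 0 → 1 < ‖z‖}

/-- The open unit cube `D_ζ = (-1,1)^q ⊆ ℝ^q`. -/
def openCube (q : ℕ) : Set (Fin q → ℝ) :=
  {ζ | ∀ i, ζ i ∈ Set.Ioo (-1 : ℝ) 1}

open Polynomial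


/-- The Szegő-type polynomial whose coefficients are `-fwdRow`. -/
noncomputable def QR (ζ : ℕ → ℝ) : ℕ → Polynomial ℝ
  | 0 => 1
  | (k+1) => QR ζ k - C (ζ (k+1)) * (X * reflect k (QR ζ k))

lemma fwdRow_eq_zero (ζ : ℕ → ℝ) : ∀ k i, i = 0 ∨ k < i → fwdRow ζ k i = 0 := by
  intro k
  induction k with
  | zero => intro i _; rfl
  | succ k ih =>
    intro i hi
    have hne : i ≠ k + 1 := by omega
    simp only [fwdRow, if_neg hne]
    rcases hi with h0 | hk
    · subst h0
      rw [Nat.sub_zero, ih 0 (Or.inl rfl), ih (k+1) (Or.inr (by omega))]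
      ring
    · rw [ih i (Or.inr (by omega)), ih (k+1-i) (Or.inl (by omega))]
      ring

lemma coeff_QR (ζ : ℕ → ℝ) : ∀ k i, (QR ζ k).coeff i =
    if i = 0 then 1 else -(fwdRow ζ k i) := by
  intro k
  induction k with
  | zero =>
    intro i
    by_cases h : i = 0 <;> simp [QR, h, fwdRow, coeff_one]
  | succ k ih =>
    intro i
    have hdeg : (QR ζ k).natDegree ≤ k := by
      rw [natDegree_le_iff_coeff_eq_zero]
      intro N hN
      rw [ih N, if_neg (by omega), fwdRow_eq_zero ζ k N (Or.inr hN)]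
      ring
    simp only [QR, coeff_sub, coeff_C_mul]
    rcases Nat.eq_zero_or_pos i with h0 | hpos
    · subst h0
      have h0 : (X * reflect k (QR ζ k)).coeff 0 = 0 := by
        rw [mul_coeff_zero, coeff_X_zero]; ring
      rw [h0, ih 0, if_pos rfl, if_pos rfl]
      ring
    · obtain ⟨j, rfl⟩ := Nat.exists_eq_add_of_lt hpos
      rw [zero_add] at *
      rw [coeff_X_mul, coeff_reflect]
      rw [if_neg (Nat.succ_ne_zero j)]
      by_cases hj : j ≤ k
      · rw [revAt_le hj, ih (k - j)]
        simp only [fwdRow]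
        by_cases hjk : j + 1 = k + 1
        · have hjk' : j = k := by omega
          subst hjk'
          rw [if_pos (Nat.sub_self j), if_pos rfl, ih (j+1), if_neg (Nat.succ_ne_zero j),
            fwdRow_eq_zero ζ j (j+1) (Or.inr (by omega))]
          ring
        · rw [if_neg hjk, if_neg (by omega : ¬ k - j = 0), ih (j+1),
            if_neg (Nat.succ_ne_zero j)]
          have h1 : k + 1 - (j+1) = k - j := by omega
          rw [h1]
          ring
      · rw [revAt_eq_self_of_lt (by omega), ih j, if_neg (by omega : ¬ j = 0),
          fwdRow_eq_zero ζ k j (Or.inr (by omega)), ih (j+1), if_neg (Nat.succ_ne_zero j),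
          fwdRow_eq_zero ζ k (j+1) (Or.inr (by omega)),
          fwdRow_eq_zero ζ (k+1) (j+1) (Or.inr (by omega))]
        ring

lemma natDegree_QR (ζ : ℕ → ℝ) (k : ℕ) : (QR ζ k).natDegree ≤ k := by
  rw [natDegree_le_iff_coeff_eq_zero]
  intro N hN
  rw [coeff_QR ζ k N, if_neg (by omega), fwdRow_eq_zero ζ k N (Or.inr hN)]
  ring

lemma QR_congr (ζ ζ' : ℕ → ℝ) : ∀ k, (∀ j, 1 ≤ j → j ≤ k → ζ j = ζ' j) →
    QR ζ k = QR ζ' k := by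
  intro k
  induction k with
  | zero => intro _; rfl
  | succ k ih =>
    intro h
    simp only [QR]
    rw [ih (fun j h1 h2 => h j h1 (by omega)), h (k+1) (by omega) le_rfl]
open Polynomial Complex

lemma natDegree_reflect_le {P : Polynomial ℂ} {N : ℕ} (hP : P.natDegree ≤ N) :
    (reflect N P).natDegree ≤ N := by
  rw [natDegree_le_iff_coeff_eq_zero]
  intro M hM
  rw [coeff_reflect, revAt_eq_self_of_lt hM]
  exact coeff_eq_zero_of_natDegree_lt (by omega)

lemma eval_reflect (P : Polynomial ℂ) {N : ℕ} (hP : P.natDegree ≤ N) {z : ℂ} (hz : z ≠ 0) :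
    (reflect N P).eval z = z ^ N * P.eval z⁻¹ := by
  rw [eval_eq_sum_range' (Nat.lt_succ_of_le (natDegree_reflect_le hP)),
    eval_eq_sum_range' (Nat.lt_succ_of_le hP), Finset.mul_sum,
    ← Finset.sum_range_reflect]
  apply Finset.sum_congr rfl
  intro i hi
  rw [Finset.mem_range] at hi
  have h2 : N + 1 - 1 - i = N - i := by omega
  rw [h2, coeff_reflect, revAt_le (by omega : N - i ≤ N), Nat.sub_sub_self (by omega : i ≤ N)]
  have h1 : z ^ N = z ^ (N - i) * z ^ i := by rw [← pow_add]; congr 1; omega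
  rw [h1, inv_pow]
  field_simp

lemma eval_map_conj (p : Polynomial ℝ) (z : ℂ) :
    (p.map Complex.ofRealHom).eval ((starRingEnd ℂ) z) =
      (starRingEnd ℂ) ((p.map Complex.ofRealHom).eval z) := by
  rw [eval_map, eval_map, hom_eval₂]
  congr 1
  exact RingHom.ext fun x => by simp

/-- nonvanishing on the closed unit disk -/
def NV (p : Polynomial ℝ) : Prop := ∀ z : ℂ, ‖z‖ ≤ 1 → (p.map Complex.ofRealHom).eval z ≠ 0

lemma norm_eval_reflect_sphere (p : Polynomial ℝ) {N : ℕ} (hp : p.natDegree ≤ N) {z : ℂ}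
    (hz : ‖z‖ = 1) :
    ‖(((reflect N p).map Complex.ofRealHom).eval z)‖ = ‖((p.map Complex.ofRealHom).eval z)‖ := by
  have hz0 : z ≠ 0 := by intro h; rw [h] at hz; simp at hz
  have hdeg : (p.map Complex.ofRealHom).natDegree ≤ N := natDegree_map_le.trans hp
  rw [← reflect_map, eval_reflect _ hdeg hz0, Complex.inv_eq_conj hz, eval_map_conj]
  rw [norm_mul, norm_pow, hz, one_pow, one_mul, RCLike.norm_conj]

lemma norm_reflect_le (p : Polynomial ℝ) {N : ℕ} (hp : p.natDegree ≤ N) (hnv : NV p)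
    {z : ℂ} (hz : ‖z‖ ≤ 1) :
    ‖(((reflect N p).map Complex.ofRealHom).eval z)‖ ≤ ‖((p.map Complex.ofRealHom).eval z)‖ := by
  set P := p.map Complex.ofRealHom with hPdef
  set Q := (reflect N p).map Complex.ofRealHom with hQdef
  have hPne : ∀ w : ℂ, w ∈ Metric.closedBall (0:ℂ) 1 → P.eval w ≠ 0 := by
    intro w hw
    exact hnv w (by simpa [Metric.mem_closedBall, dist_zero_right] using hw)
  set f : ℂ → ℂ := fun w => Q.eval w / P.eval w with hfdef
  have key : ‖f z‖ ≤ 1 := by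
    have hball : z ∈ closure (Metric.ball (0:ℂ) 1) := by
      rw [closure_ball (0:ℂ) one_ne_zero]
      simpa [Metric.mem_closedBall, dist_zero_right] using hz
    refine Complex.norm_le_of_forall_mem_frontier_norm_le Metric.isBounded_ball ?_ ?_ hball
    · constructor
      · apply DifferentiableOn.div
        · exact (Q.differentiable).differentiableOn
        · exact (P.differentiable).differentiableOn
        · intro x hx
          exact hPne x (Metric.ball_subset_closedBall hx)
      · rw [closure_ball (0:ℂ) one_ne_zero]
        apply ContinuousOn.div
        · exact (Q.continuous).continuousOn
        · exact (P.continuous).continuousOn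
        · exact hPne
    · intro x hx
      rw [frontier_ball (0:ℂ) one_ne_zero] at hx
      have hx1 : ‖x‖ = 1 := by simpa [Metric.mem_sphere, dist_zero_right] using hx
      have h0 : P.eval x ≠ 0 := hPne x (by rw [Metric.mem_closedBall, dist_zero_right]; exact hx1.le)
      rw [hfdef]
      simp only [norm_div]
      rw [hQdef, hPdef, norm_eval_reflect_sphere p hp hx1]
      rw [div_self (by simpa [hPdef] using (norm_ne_zero_iff.mpr h0))]
  have h0 : P.eval z ≠ 0 := hnv z hz
  calc ‖Q.eval z‖ = ‖f z‖ * ‖P.eval z‖ := by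
        rw [hfdef, ← norm_mul]
        simp only []
        rw [div_mul_cancel₀ _ h0]
    _ ≤ 1 * ‖P.eval z‖ := mul_le_mul_of_nonneg_right key (norm_nonneg _)
    _ = ‖P.eval z‖ := one_mul _

lemma one_le_multiset_prod {s : Multiset ℝ} (h : ∀ x ∈ s, 1 ≤ x) : 1 ≤ s.prod := by
  induction s using Multiset.induction with
  | empty => simp
  | cons a t ih =>
    rw [Multiset.prod_cons]
    have h1 := h a (Multiset.mem_cons_self a t)
    have ht := ih (fun x hx => h x (Multiset.mem_cons_of_mem hx))
    nlinarith

lemma one_lt_multiset_prod {s : Multiset ℝ} (hne : s ≠ 0) (h : ∀ x ∈ s, 1 < x) :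
    1 < s.prod := by
  obtain ⟨a, ha⟩ := Multiset.exists_mem_of_ne_zero hne
  obtain ⟨t, rfl⟩ := Multiset.exists_cons_of_mem ha
  rw [Multiset.prod_cons]
  have h1 := h a (Multiset.mem_cons_self a t)
  have ht : (1:ℝ) ≤ t.prod :=
    one_le_multiset_prod (fun x hx => (h x (Multiset.mem_cons_of_mem hx)).le)
  nlinarith

lemma abs_coeff_lt_one (p : Polynomial ℝ) {N : ℕ} (hN : 1 ≤ N) (hdeg : p.natDegree ≤ N)
    (h0 : p.coeff 0 = 1) (hnv : NV p) : |p.coeff N| < 1 := by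
  by_cases hc : p.coeff N = 0
  · rw [hc]; norm_num
  set P := p.map Complex.ofRealHom with hPdef
  have hcoeffP : P.coeff N = ((p.coeff N : ℝ) : ℂ) := by rw [hPdef, coeff_map]; rfl
  have hcP : P.coeff N ≠ 0 := by
    rw [hcoeffP]
    exact_mod_cast hc
  have hPdeg : P.natDegree = N :=
    le_antisymm (natDegree_map_le.trans hdeg) (le_natDegree_of_ne_zero hcP)
  have hcard : Multiset.card P.roots = P.natDegree :=
    (splits_iff_card_roots).mp (IsAlgClosed.splits P)
  have hfact := Polynomial.C_leadingCoeff_mul_prod_multiset_X_sub_C hcard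
  have heval0 : P.eval 0 = 1 := by
    rw [hPdef, eval_map, eval₂_at_zero, h0, map_one]
  have heval' : eval 0 (C P.leadingCoeff) * eval 0 ((P.roots.map fun a => X - C a).prod) = 1 := by
    rw [← eval_mul, hfact, heval0]
  rw [eval_C, eval_multiset_prod, Multiset.map_map] at heval'
  have hnorm := congrArg (normHom : ℂ →*₀ ℝ) heval'
  rw [map_mul, map_one, map_multiset_prod, Multiset.map_map] at hnorm
  set T := (P.roots.map ((normHom : ℂ →*₀ ℝ) ∘ (eval 0 ∘ fun a => X - C a))).prod with hT
  have hTgt : 1 < T := by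
    apply one_lt_multiset_prod
    · rw [Ne, Multiset.map_eq_zero, ← Multiset.card_eq_zero, hcard, hPdeg]
      omega
    · intro x hx
      rw [Multiset.mem_map] at hx
      obtain ⟨a, haroot, rfl⟩ := hx
      have haP : P.eval a = 0 := isRoot_of_mem_roots haroot
      have h1a : ¬ ‖a‖ ≤ 1 := fun hle => hnv a hle haP
      simp only [Function.comp_apply, eval_sub, eval_X, eval_C, zero_sub]
      show 1 < ‖-a‖
      rw [norm_neg]
      linarith [not_le.mp h1a]
  have hlead : (normHom : ℂ →*₀ ℝ) P.leadingCoeff = |p.coeff N| := by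
    rw [Polynomial.leadingCoeff, hPdeg, hcoeffP]
    exact RCLike.norm_ofReal (K := ℂ) _
  rw [hlead] at hnorm
  nlinarith [abs_nonneg (p.coeff N), hTgt, hnorm]
lemma coeff_X_mul' (p : Polynomial ℝ) (n : ℕ) :
    (X * p).coeff n = if n = 0 then 0 else p.coeff (n-1) := by
  cases n with
  | zero => simp [mul_coeff_zero]
  | succ m => rw [coeff_X_mul]; simp

lemma reflect_succ (p : Polynomial ℝ) {k : ℕ} (hp : p.natDegree ≤ k) :
    reflect (k+1) p = X * reflect k p := by
  ext i
  rw [coeff_reflect, coeff_X_mul']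
  by_cases hi0 : i = 0
  · subst hi0
    rw [if_pos rfl, revAt_le (by omega), Nat.sub_zero]
    exact coeff_eq_zero_of_natDegree_lt (by omega)
  · rw [if_neg hi0, coeff_reflect]
    by_cases hik : i ≤ k + 1
    · rw [revAt_le hik, revAt_le (by omega : i - 1 ≤ k)]
      congr 1
      omega
    · rw [revAt_eq_self_of_lt (by omega), revAt_eq_self_of_lt (by omega),
        coeff_eq_zero_of_natDegree_lt (by omega), coeff_eq_zero_of_natDegree_lt (by omega)]

lemma reflect_X_mul_reflect (p : Polynomial ℝ) {k : ℕ} (hp : p.natDegree ≤ k) :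
    reflect (k+1) (X * reflect k p) = p := by
  ext i
  rw [coeff_reflect, coeff_X_mul']
  by_cases hik : i ≤ k + 1
  · rw [revAt_le hik]
    by_cases hi0 : i = 0
    · subst hi0
      rw [Nat.sub_zero, if_neg (by omega : ¬ k + 1 = 0), coeff_reflect,
        revAt_le (by omega : k + 1 - 1 ≤ k)]
      congr 1
      omega
    · by_cases hik' : i = k + 1
      · subst hik'
        rw [if_pos (by omega : k + 1 - (k+1) = 0)]
        exact (coeff_eq_zero_of_natDegree_lt (by omega)).symm
      · rw [if_neg (by omega : ¬ k + 1 - i = 0), coeff_reflect,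
          revAt_le (by omega : k + 1 - i - 1 ≤ k)]
        congr 1
        omega
  · rw [revAt_eq_self_of_lt (by omega), if_neg (by omega : ¬ i = 0), coeff_reflect,
      revAt_eq_self_of_lt (by omega : k < i - 1),
      coeff_eq_zero_of_natDegree_lt (by omega), coeff_eq_zero_of_natDegree_lt (by omega)]

lemma reflect_QR_succ (ζ : ℕ → ℝ) (k : ℕ) :
    reflect (k+1) (QR ζ (k+1)) = X * reflect k (QR ζ k) - C (ζ (k+1)) * QR ζ k := by
  show reflect (k+1) (QR ζ k - C (ζ (k+1)) * (X * reflect k (QR ζ k))) = _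
  rw [reflect_sub, reflect_C_mul, reflect_succ _ (natDegree_QR ζ k),
    reflect_X_mul_reflect _ (natDegree_QR ζ k)]

lemma QR_inv_rel (ζ : ℕ → ℝ) (k : ℕ) :
    QR ζ k * C (1 - ζ (k+1)^2) =
      QR ζ (k+1) + C (ζ (k+1)) * reflect (k+1) (QR ζ (k+1)) := by
  rw [reflect_QR_succ]
  show QR ζ k * C (1 - ζ (k+1)^2) =
    (QR ζ k - C (ζ (k+1)) * (X * reflect k (QR ζ k))) + _
  rw [(by rw [map_sub, map_pow, map_one] : C (1 - ζ (k+1)^2) = 1 - C (ζ (k+1))^2)]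
  ring

lemma NV_QR (ζ : ℕ → ℝ) : ∀ k, (∀ j, 1 ≤ j → j ≤ k → |ζ j| < 1) → NV (QR ζ k) := by
  intro k
  induction k with
  | zero =>
    intro _ z _ h
    rw [show QR ζ 0 = 1 from rfl, Polynomial.map_one, eval_one] at h
    exact one_ne_zero h
  | succ k ih =>
    intro h z hz
    have hnvk : NV (QR ζ k) := ih (fun j h1 h2 => h j h1 (by omega))
    have hE1 : (( (QR ζ k).map Complex.ofRealHom).eval z) ≠ 0 := hnvk z hz
    have hE2 := norm_reflect_le (QR ζ k) (natDegree_QR ζ k) hnvk hz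
    rw [show QR ζ (k+1) = QR ζ k - C (ζ (k+1)) * (X * reflect k (QR ζ k)) from rfl,
      Polynomial.map_sub, Polynomial.map_mul, Polynomial.map_mul, map_C, Polynomial.map_X,
      eval_sub, eval_mul, eval_mul, eval_C, eval_X]
    intro heq
    rw [sub_eq_zero] at heq
    have hnorm := congrArg norm heq
    rw [norm_mul, norm_mul] at hnorm
    have hb : ‖Complex.ofRealHom (ζ (k+1))‖ * (‖z‖ * ‖(((reflect k (QR ζ k)).map Complex.ofRealHom).eval z)‖)
        < ‖(((QR ζ k).map Complex.ofRealHom).eval z)‖ := by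
      have hcn : ‖Complex.ofRealHom (ζ (k+1))‖ = |ζ (k+1)| := RCLike.norm_ofReal _
      have hc1 : |ζ (k+1)| < 1 := h (k+1) (by omega) le_rfl
      have hE1pos : 0 < ‖(((QR ζ k).map Complex.ofRealHom).eval z)‖ := norm_pos_iff.mpr hE1
      have h1 : ‖Complex.ofRealHom (ζ (k+1))‖ * (‖z‖ * ‖(((reflect k (QR ζ k)).map Complex.ofRealHom).eval z)‖)
          ≤ |ζ (k+1)| * ‖(((QR ζ k).map Complex.ofRealHom).eval z)‖ := by
        rw [hcn]
        apply mul_le_mul_of_nonneg_left _ (abs_nonneg _)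
        calc ‖z‖ * ‖(((reflect k (QR ζ k)).map Complex.ofRealHom).eval z)‖
            ≤ 1 * ‖(((QR ζ k).map Complex.ofRealHom).eval z)‖ :=
              mul_le_mul hz hE2 (norm_nonneg _) zero_le_one
          _ = _ := one_mul _
      calc _ ≤ |ζ (k+1)| * ‖(((QR ζ k).map Complex.ofRealHom).eval z)‖ := h1
        _ < 1 * ‖(((QR ζ k).map Complex.ofRealHom).eval z)‖ := by
            exact mul_lt_mul_of_pos_right hc1 hE1pos
        _ = _ := one_mul _
    rw [hnorm] at hb
    exact lt_irrefl _ hb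

lemma NV_QR_backward (ζ : ℕ → ℝ) : ∀ k, NV (QR ζ k) → ∀ j, 1 ≤ j → j ≤ k → |ζ j| < 1 := by
  intro k
  induction k with
  | zero => intro _ j h1 h2; omega
  | succ k ih =>
    intro hnv j h1 h2
    have hcoeff : (QR ζ (k+1)).coeff (k+1) = -(ζ (k+1)) := by
      rw [coeff_QR, if_neg (Nat.succ_ne_zero k)]
      congr 1
      show fwdRow ζ (k+1) (k+1) = ζ (k+1)
      simp [fwdRow]
    have hc : |ζ (k+1)| < 1 := by
      have := abs_coeff_lt_one (QR ζ (k+1)) (by omega) (natDegree_QR ζ (k+1))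
        (by rw [coeff_QR, if_pos rfl]) hnv
      rwa [hcoeff, abs_neg] at this
    by_cases hjk : j ≤ k
    · -- need NV (QR ζ k)
      have hnvk : NV (QR ζ k) := by
        intro z hz
        have hrel := congrArg (fun P : Polynomial ℝ => ((P.map Complex.ofRealHom).eval z))
          (QR_inv_rel ζ k)
        simp only [Polynomial.map_mul, Polynomial.map_add, map_C, eval_mul, eval_add, eval_C]
          at hrel
        have hE1 : (((QR ζ (k+1)).map Complex.ofRealHom).eval z) ≠ 0 := hnv z hz
        have hE2 := norm_reflect_le (QR ζ (k+1)) (natDegree_QR ζ (k+1)) hnv hz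
        have hrhs : (((QR ζ (k+1)).map Complex.ofRealHom).eval z) +
            Complex.ofRealHom (ζ (k+1)) *
              (((reflect (k+1) (QR ζ (k+1))).map Complex.ofRealHom).eval z) ≠ 0 := by
          intro h0
          have h0' : (((QR ζ (k+1)).map Complex.ofRealHom).eval z) =
              -(Complex.ofRealHom (ζ (k+1)) *
                (((reflect (k+1) (QR ζ (k+1))).map Complex.ofRealHom).eval z)) := by
            linear_combination h0
          have hnorm := congrArg norm h0'
          rw [norm_neg, norm_mul] at hnorm
          rw [show ‖Complex.ofRealHom (ζ (k+1))‖ = |ζ (k+1)| from RCLike.norm_ofReal _] at hnorm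
          have hE1pos : 0 < ‖(((QR ζ (k+1)).map Complex.ofRealHom).eval z)‖ :=
            norm_pos_iff.mpr hE1
          nlinarith [abs_nonneg (ζ (k+1)), norm_nonneg
            (((reflect (k+1) (QR ζ (k+1))).map Complex.ofRealHom).eval z)]
        intro h0
        rw [h0, zero_mul] at hrel
        exact hrhs hrel.symm
      exact ih hnvk j h1 hjk
    · have : j = k + 1 := by omega
      subst this
      exact hc
lemma key_identity (p : Polynomial ℝ) {k : ℕ} (hp : p.natDegree ≤ k+1) (h0 : p.coeff 0 = 1)
    (hc2 : 1 - p.coeff (k+1)^2 ≠ 0) :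
    C ((1 - p.coeff (k+1)^2)⁻¹) * (p - C (p.coeff (k+1)) * reflect (k+1) p) +
      C (p.coeff (k+1)) * (X * reflect k (C ((1 - p.coeff (k+1)^2)⁻¹) *
        (p - C (p.coeff (k+1)) * reflect (k+1) p))) = p := by
  set c := p.coeff (k+1) with hcdef
  ext i
  simp only [coeff_add, coeff_C_mul, coeff_sub, coeff_X_mul', coeff_reflect]
  rcases Nat.lt_or_ge i 1 with hi0 | hi1
  · have hi0' : i = 0 := by omega
    subst hi0'
    rw [if_pos rfl, revAt_le (by omega : (0:ℕ) ≤ k + 1), Nat.sub_zero, h0, ← hcdef, mul_zero,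
      add_zero]
    field_simp
  · rcases Nat.lt_or_ge (k+1) i with hbig | hle
    · rw [if_neg (by omega : ¬ i = 0), revAt_eq_self_of_lt hbig]
      have hp1 : p.coeff i = 0 := coeff_eq_zero_of_natDegree_lt (by omega)
      rcases Nat.lt_or_ge (k+1) (i-1) with hb2 | hle2
      · rw [revAt_eq_self_of_lt (by omega : k < i - 1),
          revAt_eq_self_of_lt hb2, hp1,
          coeff_eq_zero_of_natDegree_lt (by omega : p.natDegree < i - 1)]
        ring
      · have hieq : i - 1 = k + 1 := by omega
        rw [revAt_eq_self_of_lt (by omega : k < i - 1), hieq,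
          revAt_le (le_refl (k+1)), Nat.sub_self, hp1, h0, ← hcdef]
        ring
    · rw [if_neg (by omega : ¬ i = 0), revAt_le hle,
        revAt_le (by omega : i - 1 ≤ k),
        revAt_le (by omega : k - (i-1) ≤ k + 1)]
      have h1 : k + 1 - (k - (i-1)) = i := by omega
      have h2 : k - (i - 1) = k + 1 - i := by omega
      rw [h1, h2]
      field_simp
      ring

lemma exists_QR_eq : ∀ (k : ℕ) (p : Polynomial ℝ), p.natDegree ≤ k → p.coeff 0 = 1 → NV p →
    ∃ ζ : ℕ → ℝ, (∀ j, |ζ j| < 1) ∧ QR ζ k = p := by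
  intro k
  induction k with
  | zero =>
    intro p hdeg h0 _
    refine ⟨fun _ => 0, fun j => by norm_num, ?_⟩
    rw [show QR (fun _ => 0) 0 = 1 from rfl, Polynomial.eq_C_of_natDegree_le_zero hdeg, h0, map_one]
  | succ k ih =>
    intro p hdeg h0 hnv
    set c := p.coeff (k+1) with hcdef
    have hc : |c| < 1 := abs_coeff_lt_one p (by omega) hdeg h0 hnv
    have hc2 : (1:ℝ) - c^2 ≠ 0 := by nlinarith [_root_.sq_abs c, abs_nonneg c]
    have hc2' : (0:ℝ) < 1 - c^2 := by nlinarith [_root_.sq_abs c, abs_nonneg c]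
    set p' := C ((1 - c^2)⁻¹) * (p - C c * reflect (k+1) p) with hp'def
    have hcoeffp' : ∀ i, p'.coeff i = (1 - c^2)⁻¹ * (p.coeff i - c * p.coeff (revAt (k+1) i)) := by
      intro i
      rw [hp'def]
      simp only [coeff_C_mul, coeff_sub, coeff_reflect]
    have hdeg' : p'.natDegree ≤ k := by
      rw [natDegree_le_iff_coeff_eq_zero]
      intro N hN
      rw [hcoeffp' N]
      rcases Nat.lt_or_ge (k+1) N with hb | hle
      · rw [revAt_eq_self_of_lt hb, coeff_eq_zero_of_natDegree_lt (by omega)]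
        ring
      · have hNeq : N = k + 1 := by omega
        subst hNeq
        rw [revAt_le (le_refl (k+1)), Nat.sub_self, h0, ← hcdef]
        ring
    have h0' : p'.coeff 0 = 1 := by
      rw [hcoeffp' 0, revAt_le (by omega : (0:ℕ) ≤ k+1), Nat.sub_zero, h0, ← hcdef]
      field_simp
    have hnv' : NV p' := by
      intro z hz
      have hE1 : ((p.map Complex.ofRealHom).eval z) ≠ 0 := hnv z hz
      have hE2 := norm_reflect_le p hdeg hnv hz
      rw [hp'def, Polynomial.map_mul, Polynomial.map_sub, Polynomial.map_mul, map_C, map_C,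
        eval_mul, eval_sub, eval_mul, eval_C, eval_C]
      apply mul_ne_zero
      · simp only [Complex.ofRealHom_eq_coe, Ne, Complex.ofReal_eq_zero]
        exact inv_ne_zero hc2
      · intro hh
        rw [sub_eq_zero] at hh
        have hnorm := congrArg norm hh
        rw [norm_mul] at hnorm
        rw [show ‖Complex.ofRealHom c‖ = |c| from RCLike.norm_ofReal _] at hnorm
        have hE1pos : 0 < ‖((p.map Complex.ofRealHom).eval z)‖ := norm_pos_iff.mpr hE1
        nlinarith [norm_nonneg (((reflect (k+1) p).map Complex.ofRealHom).eval z),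
          mul_le_mul_of_nonneg_left hE2 (abs_nonneg c),
          mul_lt_mul_of_pos_right hc hE1pos]
    obtain ⟨ζ', hζ', hQ'⟩ := ih p' hdeg' h0' hnv'
    set ζn : ℕ → ℝ := fun j => if j = k+1 then -c else ζ' j with hζndef
    refine ⟨ζn, ?_, ?_⟩
    · intro j
      by_cases hj : j = k+1
      · simp only [hζndef, if_pos hj, abs_neg]; exact hc
      · simp only [hζndef, if_neg hj]; exact hζ' j
    · have hQk : QR ζn k = p' := by
        rw [QR_congr ζn ζ' k (fun j _ hj2 => by
          simp only [hζndef, if_neg (by omega : ¬ j = k+1)]), hQ']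
      have hval : ζn (k+1) = -c := by simp only [hζndef, if_pos rfl]
      rw [show QR ζn (k+1) = QR ζn k - C (ζn (k+1)) * (X * reflect k (QR ζn k)) from rfl,
        hQk, hval, map_neg, neg_mul, sub_neg_eq_add]
      exact key_identity p hdeg h0 (by rw [← hcdef]; exact hc2)
noncomputable def polyOf {q : ℕ} (v : Fin q → ℝ) : Polynomial ℝ :=
  1 - ∑ i : Fin q, C (v i) * X^(i.1+1)

lemma toSeq_apply_fin {q : ℕ} (v : Fin q → ℝ) (i : Fin q) : toSeq v (i.1+1) = v i := by
  unfold toSeq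
  rw [dif_pos (by omega : i.1 + 1 - 1 < q)]
  congr 1

lemma coeff_polyOf {q : ℕ} (v : Fin q → ℝ) (n : ℕ) :
    (polyOf v).coeff n = if n = 0 then 1 else -(toSeq v n) := by
  unfold polyOf toSeq
  rw [coeff_sub, finset_sum_coeff]
  simp only [coeff_C_mul, coeff_X_pow]
  by_cases hn : n = 0
  · subst hn
    rw [if_pos rfl, coeff_one, if_pos rfl,
      Finset.sum_congr rfl (fun (i : Fin q) _ => by
        rw [if_neg (by omega : ¬ (0:ℕ) = i.1+1), mul_zero]),
      Finset.sum_const_zero]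
    ring
  · rw [if_neg hn, coeff_one, if_neg hn]
    by_cases h : n - 1 < q
    · rw [dif_pos h, Finset.sum_eq_single (⟨n-1, h⟩ : Fin q)]
      · have hcond : n = (⟨n-1, h⟩ : Fin q).1 + 1 := by show n = n - 1 + 1; omega
        rw [if_pos hcond, mul_one]
        ring
      · intro b _ hb
        have hne : ¬ n = b.1 + 1 := by
          intro hh
          apply hb
          apply Fin.ext
          show b.1 = n - 1
          omega
        rw [if_neg hne, mul_zero]
      · intro habs
        exact absurd (Finset.mem_univ _) habs
    · rw [dif_neg h,
        Finset.sum_congr rfl (fun (i : Fin q) _ => by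
          have := i.2
          rw [if_neg (by omega : ¬ n = i.1+1), mul_zero]),
        Finset.sum_const_zero]
      ring

lemma polyOf_Bmap {q : ℕ} (v : Fin q → ℝ) : polyOf (Bmap v) = QR (toSeq v) q := by
  ext n
  rw [coeff_polyOf, coeff_QR]
  by_cases hn : n = 0
  · rw [if_pos hn, if_pos hn]
  · rw [if_neg hn, if_neg hn]
    congr 1
    rw [show toSeq (Bmap v) n = (if h : n - 1 < q then Bmap v ⟨n-1, h⟩ else 0) from rfl]
    by_cases h : n - 1 < q
    · rw [dif_pos h]
      show fwdRow (toSeq v) q (n - 1 + 1) = _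
      congr 1
      omega
    · rw [dif_neg h, fwdRow_eq_zero (toSeq v) q n (Or.inr (by omega))]

lemma natDegree_polyOf {q : ℕ} (v : Fin q → ℝ) : (polyOf v).natDegree ≤ q := by
  rw [natDegree_le_iff_coeff_eq_zero]
  intro N hN
  rw [coeff_polyOf, if_neg (by omega)]
  unfold toSeq
  rw [dif_neg (by omega)]
  ring

lemma coeff_zero_polyOf {q : ℕ} (v : Fin q → ℝ) : (polyOf v).coeff 0 = 1 := by
  rw [coeff_polyOf, if_pos rfl]

lemma eval_polyOf {q : ℕ} (v : Fin q → ℝ) (z : ℂ) :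
    ((polyOf v).map Complex.ofRealHom).eval z = 1 - ∑ i : Fin q, (v i : ℂ) * z^(i.1+1) := by
  unfold polyOf
  rw [Polynomial.map_sub, Polynomial.map_one, Polynomial.map_sum, eval_sub, eval_one,
    eval_finset_sum]
  congr 1
  apply Finset.sum_congr rfl
  intro i _
  rw [Polynomial.map_mul, map_C, Polynomial.map_pow, Polynomial.map_X, eval_mul, eval_C,
    eval_pow, eval_X, Complex.ofRealHom_eq_coe]

lemma invRegion_iff_NV {q : ℕ} (v : Fin q → ℝ) : v ∈ invRegion q ↔ NV (polyOf v) := by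
  constructor
  · intro hv z hz h0
    have h1 : 1 < ‖z‖ := hv z (by rw [← eval_polyOf v z]; exact h0)
    exact absurd hz (not_le.mpr h1)
  · intro hnv z hroot
    by_contra hle
    push_neg at hle
    refine hnv z (by exact hle) ?_
    rw [eval_polyOf]
    exact hroot

lemma Bmap_mem_invRegion {q : ℕ} {ζ : Fin q → ℝ} (h : ζ ∈ openCube q) :
    Bmap ζ ∈ invRegion q := by
  rw [invRegion_iff_NV, polyOf_Bmap]
  apply NV_QR (toSeq ζ) q
  intro j h1 h2
  unfold toSeq
  rw [dif_pos (by omega : j - 1 < q)]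
  have := h ⟨j-1, by omega⟩
  rw [Set.mem_Ioo] at this
  rw [abs_lt]
  exact this

lemma invRegion_to_openCube {q : ℕ} {ζ : Fin q → ℝ}
    (hcl : ∀ i, ζ i ∈ Set.Icc (-1:ℝ) 1) (h : Bmap ζ ∈ invRegion q) : ζ ∈ openCube q := by
  rw [invRegion_iff_NV, polyOf_Bmap] at h
  intro i
  have := NV_QR_backward (toSeq ζ) q h (i.1+1) (by omega) i.2
  rw [toSeq_apply_fin] at this
  rw [Set.mem_Ioo]
  exact abs_lt.mp this

lemma invRegion_surj {q : ℕ} {v : Fin q → ℝ} (hv : v ∈ invRegion q) :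
    ∃ ζ ∈ openCube q, Bmap ζ = v := by
  rw [invRegion_iff_NV] at hv
  obtain ⟨ζs, hb, hQ⟩ := exists_QR_eq q (polyOf v) (natDegree_polyOf v)
    (coeff_zero_polyOf v) hv
  refine ⟨fun i => ζs (i.1+1), ?_, ?_⟩
  · intro i
    rw [Set.mem_Ioo]
    exact abs_lt.mp (hb (i.1+1))
  · have hts : ∀ j, 1 ≤ j → j ≤ q → toSeq (fun i : Fin q => ζs (i.1+1)) j = ζs j := by
      intro j h1 h2
      rw [show toSeq (fun i : Fin q => ζs (i.1+1)) j =
          (if h : j - 1 < q then ζs (j-1+1) else 0) from rfl,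
        dif_pos (by omega : j - 1 < q)]
      congr 1
      omega
    have hQR : QR (toSeq (fun i : Fin q => ζs (i.1+1))) q = polyOf v := by
      rw [QR_congr _ ζs q hts, hQ]
    funext i
    show fwdRow (toSeq (fun i : Fin q => ζs (i.1+1))) q (i.1+1) = v i
    have hco := coeff_QR (toSeq (fun i : Fin q => ζs (i.1+1))) q (i.1+1)
    rw [hQR, coeff_polyOf, if_neg (Nat.succ_ne_zero _), if_neg (Nat.succ_ne_zero _),
      toSeq_apply_fin] at hco
    linarith [hco]
lemma continuous_toSeq (q n : ℕ) : Continuous (fun v : Fin q → ℝ => toSeq v n) := by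
  by_cases h : n - 1 < q
  · have he : (fun v : Fin q → ℝ => toSeq v n) = fun v => v ⟨n-1, h⟩ := by
      funext v; exact dif_pos h
    rw [he]; exact continuous_apply _
  · have he : (fun v : Fin q → ℝ => toSeq v n) = fun _ => 0 := by
      funext v; exact dif_neg h
    rw [he]; exact continuous_const

lemma continuous_fwdRow (q : ℕ) : ∀ k i, Continuous (fun v : Fin q → ℝ => fwdRow (toSeq v) k i) := by
  intro k
  induction k with
  | zero => intro i; exact continuous_const
  | succ k ih =>
    intro i
    have he : (fun v : Fin q → ℝ => fwdRow (toSeq v) (k+1) i) =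
        fun v => if i = k+1 then toSeq v (k+1)
          else fwdRow (toSeq v) k i - toSeq v (k+1) * fwdRow (toSeq v) k (k+1-i) := rfl
    rw [he]
    by_cases hik : i = k+1
    · simp only [if_pos hik]; exact continuous_toSeq q (k+1)
    · simp only [if_neg hik]
      exact (ih i).sub ((continuous_toSeq q (k+1)).mul (ih (k+1-i)))

lemma continuous_Bmap (q : ℕ) : Continuous (Bmap (q := q)) :=
  continuous_pi fun i => continuous_fwdRow q q (i.1+1)

lemma isOpen_invRegion (q : ℕ) (hq : 1 ≤ q) : IsOpen (invRegion q) := by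
  rw [Metric.isOpen_iff]
  intro v hv
  have hvNV : NV (polyOf v) := (invRegion_iff_NV v).mp hv
  obtain ⟨z0, hz0mem, hz0min⟩ := (isCompact_closedBall (0:ℂ) 1).exists_isMinOn
    (Metric.nonempty_closedBall.mpr zero_le_one)
    ((Polynomial.continuous ((polyOf v).map Complex.ofRealHom)).norm.continuousOn)
  set m := ‖(((polyOf v).map Complex.ofRealHom)).eval z0‖ with hm_def
  have hm : 0 < m := norm_pos_iff.mpr
    (hvNV z0 (by simpa [Metric.mem_closedBall, dist_zero_right] using hz0mem))
  have hqpos : (0:ℝ) < q := by exact_mod_cast hq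
  refine ⟨m / q, by positivity, ?_⟩
  intro w hw
  have hdistw : dist w v < m / q := Metric.mem_ball.mp hw
  rw [invRegion_iff_NV]
  intro z hz h0
  have hsum : ‖∑ i : Fin q, (((w i:ℂ)) - (v i:ℂ)) * z^(i.1+1)‖ < m := by
    calc ‖∑ i : Fin q, (((w i:ℂ)) - (v i:ℂ)) * z^(i.1+1)‖
        ≤ ∑ i : Fin q, ‖(((w i:ℂ)) - (v i:ℂ)) * z^(i.1+1)‖ := norm_sum_le _ _
      _ ≤ ∑ _i : Fin q, dist w v := by
          apply Finset.sum_le_sum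
          intro i _
          rw [norm_mul, norm_pow]
          have h1 : ‖((w i:ℂ)) - (v i:ℂ)‖ = |w i - v i| := by
            rw [← Complex.ofReal_sub]
            exact RCLike.norm_ofReal _
          have h2 : ‖z‖^(i.1+1) ≤ 1 := pow_le_one₀ (norm_nonneg z) hz
          calc ‖((w i:ℂ)) - (v i:ℂ)‖ * ‖z‖^(i.1+1)
              ≤ ‖((w i:ℂ)) - (v i:ℂ)‖ * 1 := mul_le_mul_of_nonneg_left h2 (norm_nonneg _)
            _ = |w i - v i| := by rw [mul_one, h1]
            _ = dist (w i) (v i) := (Real.dist_eq _ _).symm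
            _ ≤ dist w v := dist_le_pi_dist w v i
      _ = q * dist w v := by
          rw [Finset.sum_const, Finset.card_univ, Fintype.card_fin, nsmul_eq_mul]
      _ < q * (m / q) := mul_lt_mul_of_pos_left hdistw hqpos
      _ = m := by field_simp
  have hPv : ((polyOf v).map Complex.ofRealHom).eval z =
      ∑ i : Fin q, (((w i:ℂ)) - (v i:ℂ)) * z^(i.1+1) := by
    rw [eval_polyOf] at h0
    rw [eval_polyOf]
    have h1 : (1:ℂ) = ∑ i : Fin q, (w i : ℂ) * z^(i.1+1) := by linear_combination h0
    calc (1:ℂ) - ∑ i : Fin q, (v i:ℂ) * z^(i.1+1)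
        = (∑ i : Fin q, (w i:ℂ) * z^(i.1+1)) - ∑ i : Fin q, (v i:ℂ) * z^(i.1+1) := by
          rw [← h1]
      _ = ∑ i : Fin q, (((w i:ℂ)) - (v i:ℂ)) * z^(i.1+1) := by
          rw [← Finset.sum_sub_distrib]
          apply Finset.sum_congr rfl
          intro i _
          ring
  have hge : m ≤ ‖((polyOf v).map Complex.ofRealHom).eval z‖ := by
    have hzmem : z ∈ Metric.closedBall (0:ℂ) 1 := by
      rw [Metric.mem_closedBall, dist_zero_right]; exact hz
    exact isMinOn_iff.mp hz0min z hzmem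
  rw [hPv] at hge
  linarith

lemma openCube_eq (q : ℕ) :
    openCube q = Set.pi Set.univ (fun _ : Fin q => Set.Ioo (-1:ℝ) 1) := by
  ext v
  simp [openCube, Set.mem_pi]

lemma isOpen_openCube (q : ℕ) : IsOpen (openCube q) := by
  rw [openCube_eq]
  exact isOpen_set_pi Set.finite_univ (fun i _ => isOpen_Ioo)

lemma closure_openCube (q : ℕ) :
    closure (openCube q) = Set.pi Set.univ (fun _ : Fin q => Set.Icc (-1:ℝ) 1) := by
  rw [openCube_eq, closure_pi_set]
  apply congrArg (Set.pi Set.univ)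
  funext i
  exact closure_Ioo (by norm_num : (-1:ℝ) ≠ 1)
/-- For `q ≥ 1`, `B` carries the frontier of the open unit cube `(-1,1)^q` onto the
frontier of the invertible region: `B(∂D_ζ) = ∂D_θ`. -/
theorem boundary_image_eq {q : ℕ} (hq : 1 ≤ q) :
    Bmap '' frontier (openCube q) = frontier (invRegion q) := by
  have hBcont : Continuous (Bmap (q := q)) := continuous_Bmap q
  set K := Set.pi Set.univ (fun _ : Fin q => Set.Icc (-1:ℝ) 1) with hK
  have hclosure : closure (openCube q) = K := closure_openCube q
  have hKcomp : IsCompact K := isCompact_univ_pi fun i => isCompact_Icc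
  have hfront : frontier (openCube q) = K \ openCube q := by
    rw [frontier, hclosure, (isOpen_openCube q).interior_eq]
  have hopen_sub : openCube q ⊆ K := by rw [← hclosure]; exact subset_closure
  have himg_eq : Bmap '' openCube q = invRegion q := by
    apply Set.Subset.antisymm
    · rintro x ⟨ζ, hζ, rfl⟩
      exact Bmap_mem_invRegion hζ
    · intro v hv
      obtain ⟨ζ, hζ, hB⟩ := invRegion_surj hv
      exact ⟨ζ, hζ, hB⟩
  have hKimg_closed : IsClosed (Bmap '' K) := (hKcomp.image hBcont).isClosed
  have hclosure_inv : closure (invRegion q) = Bmap '' K := by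
    apply Set.Subset.antisymm
    · apply closure_minimal _ hKimg_closed
      rw [← himg_eq]
      exact Set.image_mono hopen_sub
    · rw [← hclosure, ← himg_eq]
      exact image_closure_subset_closure_image hBcont
  have hdisj : ∀ ζ ∈ K \ openCube q, Bmap ζ ∉ invRegion q := by
    intro ζ hζ hmem
    exact hζ.2 (invRegion_to_openCube (fun i => Set.mem_univ_pi.mp hζ.1 i) hmem)
  have hfrontinv : frontier (invRegion q) = Bmap '' K \ invRegion q := by
    rw [frontier, hclosure_inv, (isOpen_invRegion q hq).interior_eq]
  rw [hfront, hfrontinv]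
  apply Set.Subset.antisymm
  · rintro x ⟨ζ, hζ, rfl⟩
    exact ⟨⟨ζ, hζ.1, rfl⟩, hdisj ζ hζ⟩
  · rintro x ⟨⟨ζ, hζK, rfl⟩, hnot⟩
    refine ⟨ζ, ⟨hζK, fun hop => hnot ?_⟩, rfl⟩
    rw [← himg_eq]
    exact ⟨ζ, hop, rfl⟩
end

section
/- Let q ≥ 1. Every point of the frontier of the invertible region D_θ is the image under B of a point of the frontier of the open unit cube: ∂D_θ ⊆ B(∂D_ζ). -/
namespace BNS
open Polynomial Metric Set Finset

/-- `Pk k a` is the polynomial `1 - a 1 • X - ⋯ - a k • X^k`. -/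
noncomputable def Pk (k : ℕ) (a : ℕ → ℝ) : Polynomial ℂ :=
  1 - ∑ i ∈ Finset.range k, C (a (i+1) : ℂ) * X ^ (i+1)

/-- `Gk k a` is the reversed polynomial `X^k - a 1 • X^{k-1} - ⋯ - a k`. -/
noncomputable def Gk (k : ℕ) (a : ℕ → ℝ) : Polynomial ℂ :=
  X ^ k - ∑ i ∈ Finset.range k, C (a (i+1) : ℂ) * X ^ (k - (i+1))

lemma eval_Pk (k : ℕ) (a : ℕ → ℝ) (z : ℂ) :
    (Pk k a).eval z = 1 - ∑ i ∈ Finset.range k, (a (i+1) : ℂ) * z ^ (i+1) := by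
  simp [Pk, eval_finset_sum]

lemma eval_Gk (k : ℕ) (a : ℕ → ℝ) (z : ℂ) :
    (Gk k a).eval z = z ^ k - ∑ i ∈ Finset.range k, (a (i+1) : ℂ) * z ^ (k - (i+1)) := by
  simp [Gk, eval_finset_sum]

lemma pow_sub_eq {z : ℂ} (hz : z ≠ 0) {m k : ℕ} (h : m ≤ k) :
    z ^ (k - m) = z ^ k * (z⁻¹) ^ m := by
  have h1 : z ^ (k - m) * z ^ m = z ^ k := by rw [← pow_add]; congr 1; omega
  rw [← h1, mul_assoc, ← mul_pow, mul_inv_cancel₀ hz, one_pow, mul_one]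

/-- Reversal identity: `G(z) = z^k P(1/z)` for `z ≠ 0`. -/
lemma eval_Gk_eq (k : ℕ) (a : ℕ → ℝ) {z : ℂ} (hz : z ≠ 0) :
    (Gk k a).eval z = z ^ k * (Pk k a).eval z⁻¹ := by
  rw [eval_Gk, eval_Pk, mul_sub, mul_one, Finset.mul_sum]
  congr 1
  refine Finset.sum_congr rfl fun i hi => ?_
  rw [Finset.mem_range] at hi
  rw [pow_sub_eq hz (by omega)]; ring

/-- On the unit circle, `|G(z)| = |P(z)|` (real coefficients). -/
lemma abs_eval_Gk (k : ℕ) (a : ℕ → ℝ) {z : ℂ} (hz : ‖z‖ = 1) :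
    ‖(Gk k a).eval z‖ = ‖(Pk k a).eval z‖ := by
  have hz0 : z ≠ 0 := by intro h; rw [h] at hz; simp at hz
  have hinv : z⁻¹ = (starRingEnd ℂ) z := by
    rw [Complex.inv_def, Complex.normSq_eq_norm_sq, hz]; simp
  have hconj : (Pk k a).eval z⁻¹ = (starRingEnd ℂ) ((Pk k a).eval z) := by
    rw [hinv, eval_Pk, eval_Pk, map_sub, map_one, map_sum]
    congr 1
    refine Finset.sum_congr rfl fun i _ => ?_
    rw [map_mul, map_pow, Complex.conj_ofReal]
  rw [eval_Gk_eq k a hz0, norm_mul, hconj, norm_pow, hz, one_pow, one_mul,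
    Complex.norm_conj]

/-- The non-vanishing predicate on the closed unit disc. -/
def nonV (k : ℕ) (a : ℕ → ℝ) : Prop :=
  ∀ z : ℂ, ‖z‖ ≤ 1 → (Pk k a).eval z ≠ 0

/-- Maximum modulus: if `P ≠ 0` on the closed disc and `|G| = |P|` on the circle,
then `|G| ≤ |P|` on the closed disc. -/
lemma maxmod (P G : Polynomial ℂ) (hP : ∀ z : ℂ, ‖z‖ ≤ 1 → P.eval z ≠ 0)
    (hPG : ∀ z : ℂ, ‖z‖ = 1 →
      ‖G.eval z‖ = ‖P.eval z‖) :
    ∀ z : ℂ, ‖z‖ ≤ 1 → ‖G.eval z‖ ≤ ‖P.eval z‖ := by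
  intro z hz
  set f : ℂ → ℂ := fun w => G.eval w / P.eval w with hf
  have habs : ∀ w : ℂ, w ∈ closedBall (0:ℂ) 1 → ‖w‖ ≤ 1 := by
    intro w hw; simpa [Complex.dist_eq] using hw
  have hcl : closure (ball (0:ℂ) 1) = closedBall (0:ℂ) 1 := closure_ball 0 one_ne_zero
  have hd : DiffContOnCl ℂ f (ball (0:ℂ) 1) := by
    constructor
    · exact (G.differentiable.differentiableOn).div (P.differentiable.differentiableOn)
        (fun w hw => hP w (le_of_lt (by simpa [Complex.dist_eq] using hw)))
    · rw [hcl]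
      exact (G.continuous.continuousOn).div (P.continuous.continuousOn)
        (fun w hw => hP w (habs w hw))
  have hfr : ∀ w ∈ frontier (ball (0:ℂ) 1), ‖f w‖ ≤ 1 := by
    intro w hw
    rw [frontier_ball 0 one_ne_zero] at hw
    have hw1 : ‖w‖ = 1 := by simpa [Complex.dist_eq] using hw
    have := hPG w hw1
    simp only [hf, norm_div, this]
    exact div_self_le_one _
  have hzc : z ∈ closure (ball (0:ℂ) 1) := by
    rw [hcl]; simpa [Complex.dist_eq] using hz
  have := Complex.norm_le_of_forall_mem_frontier_norm_le isBounded_ball hd hfr hzc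
  rw [hf] at this
  simp only [norm_div] at this
  have hPz : 0 < ‖P.eval z‖ :=
    norm_pos_iff.mpr (hP z hz)
  calc ‖G.eval z‖
      = ‖G.eval z‖ / ‖P.eval z‖ * ‖P.eval z‖ := by
        field_simp
    _ ≤ 1 * ‖P.eval z‖ := by
        exact mul_le_mul_of_nonneg_right this (le_of_lt hPz)
    _ = _ := one_mul _

/-- One-step forward Levinson/Schur identity. -/
lemma step_identity (k : ℕ) (a b : ℕ → ℝ) (c : ℝ)
    (hb : ∀ i, 1 ≤ i → i ≤ k → b i = a i - c * a (k + 1 - i))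
    (hbk : b (k+1) = c) :
    Pk (k+1) b = Pk k a - C (c:ℂ) * X * Gk k a := by
  unfold Pk Gk
  rw [Finset.sum_range_succ]
  have h1 : ∀ i ∈ Finset.range k,
      C (b (i+1) : ℂ) * X ^ (i+1)
        = C (a (i+1) : ℂ) * X ^ (i+1) - C (c:ℂ) * C (a (k-i) : ℂ) * X ^ (i+1) := by
    intro i hi
    rw [Finset.mem_range] at hi
    rw [hb (i+1) (by omega) (by omega)]
    have : k + 1 - (i+1) = k - i := by omega
    rw [this, Complex.ofReal_sub, Complex.ofReal_mul, map_sub, map_mul]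
    ring
  rw [Finset.sum_congr rfl h1, Finset.sum_sub_distrib, hbk]
  have h2 : ∑ i ∈ Finset.range k, C (c:ℂ) * C (a (k-i) : ℂ) * X ^ (i+1)
      = C (c:ℂ) * X * ∑ i ∈ Finset.range k, C (a (i+1) : ℂ) * X ^ (k - (i+1)) := by
    rw [Finset.mul_sum]
    rw [← Finset.sum_range_reflect]
    refine Finset.sum_congr rfl fun i hi => ?_
    rw [Finset.mem_range] at hi
    have e1 : k - (k - 1 - i) = i + 1 := by omega
    have e2 : k - 1 - i + 1 = k - i := by omega
    have e3 : k - i = (k - (i+1)) + 1 := by omega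
    rw [e1, e2, e3, pow_succ]
    ring
  rw [h2]
  ring

/-- Forward step preserves non-vanishing on the closed disc. -/
lemma step_fwd (k : ℕ) (a b : ℕ → ℝ) (c : ℝ) (hc : |c| < 1)
    (hb : ∀ i, 1 ≤ i → i ≤ k → b i = a i - c * a (k + 1 - i))
    (hbk : b (k+1) = c) (ha : nonV k a) : nonV (k+1) b := by
  intro z hz h0
  rw [step_identity k a b c hb hbk] at h0
  simp only [eval_sub, eval_mul, eval_C, eval_X] at h0
  have heq : (Pk k a).eval z = (c:ℂ) * z * (Gk k a).eval z := by
    linear_combination h0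
  have hGP := maxmod (Pk k a) (Gk k a) ha (fun w hw => abs_eval_Gk k a hw) z hz
  have hlt : ‖(Pk k a).eval z‖ < ‖(Pk k a).eval z‖ := by
    calc ‖(Pk k a).eval z‖
        = |c| * ‖z‖ * ‖(Gk k a).eval z‖ := by
          rw [heq]; simp [norm_mul, Complex.norm_real]
      _ ≤ |c| * 1 * ‖(Pk k a).eval z‖ := by
          apply mul_le_mul
          · apply mul_le_mul_of_nonneg_left hz (abs_nonneg c)
          · exact hGP
          · exact norm_nonneg _
          · positivity
      _ < 1 * ‖(Pk k a).eval z‖ := by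
          rw [mul_one]
          exact mul_lt_mul_of_pos_right hc (norm_pos_iff.mpr (ha z hz))
      _ = _ := one_mul _
  exact lt_irrefl _ hlt

lemma eval_Pk_zero (k : ℕ) (a : ℕ → ℝ) : (Pk k a).eval 0 = 1 := by
  rw [eval_Pk]
  simp

lemma eval_Gk_zero (k : ℕ) (a : ℕ → ℝ) : (Gk (k+1) a).eval 0 = -(a (k+1) : ℂ) := by
  rw [eval_Gk]
  rw [Finset.sum_eq_single k]
  · simp
  · intro i hi hne
    rw [Finset.mem_range] at hi
    have : k + 1 - (i+1) = k - i := by omega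
    rw [this, zero_pow (by omega)]
    ring
  · intro h
    exact absurd (Finset.self_mem_range_succ k) h

lemma eval_one_eq (k : ℕ) (a : ℕ → ℝ) : (Gk k a).eval 1 = (Pk k a).eval 1 := by
  rw [eval_Gk, eval_Pk]
  simp

lemma coeff_Pk_top (k : ℕ) (a : ℕ → ℝ) : (Pk (k+1) a).coeff (k+1) = -(a (k+1) : ℂ) := by
  unfold Pk
  rw [coeff_sub, Polynomial.coeff_one, finset_sum_coeff]
  rw [Finset.sum_eq_single k]
  · simp
  · intro i hi hne
    rw [Finset.mem_range] at hi
    rw [coeff_C_mul, coeff_X_pow, if_neg (by omega)]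
    ring
  · intro h
    exact absurd (Finset.self_mem_range_succ k) h

lemma ball_infinite : (ball (0:ℂ) 1).Infinite := by
  refine Set.infinite_of_injective_forall_mem (f := fun n : ℕ => ((1 / (n+2) : ℝ) : ℂ)) ?_ ?_
  · intro m n h
    simp only [Complex.ofReal_inj] at h
    have hm : (m:ℝ) + 2 ≠ 0 := by positivity
    have hn : (n:ℝ) + 2 ≠ 0 := by positivity
    field_simp at h
    exact_mod_cast (by linarith : (m:ℝ) = n)
  · intro n
    simp only [mem_ball, Complex.dist_eq, sub_zero, Complex.norm_real, Real.norm_eq_abs]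
    rw [abs_of_pos (by positivity), div_lt_one (by positivity)]
    linarith [Nat.cast_nonneg (α := ℝ) n]

/-- The diagonal entry is strictly less than one in absolute value. -/
lemma diag_lt_one (k : ℕ) (b : ℕ → ℝ) (hQ : nonV (k+1) b) : |b (k+1)| < 1 := by
  set Q := Pk (k+1) b with hQdef
  set G := Gk (k+1) b with hGdef
  have hmm := maxmod Q G hQ (fun w hw => abs_eval_Gk (k+1) b hw)
  have h0 := hmm 0 (by simp)
  rw [eval_Pk_zero, eval_Gk_zero] at h0
  simp only [norm_one, norm_neg, Complex.norm_real, Real.norm_eq_abs] at h0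
  rcases lt_or_eq_of_le h0 with h | h
  · exact h
  -- |b (k+1)| = 1 : derive a contradiction
  exfalso
  set θ : ℝ := b (k+1) with hθ
  set H : ℂ → ℂ := fun z => G.eval z / Q.eval z with hH
  have habs : ∀ w : ℂ, w ∈ ball (0:ℂ) 1 → ‖w‖ ≤ 1 := by
    intro w hw; exact le_of_lt (by simpa [Complex.dist_eq] using hw)
  have hmax : IsMaxOn (norm ∘ H) (ball (0:ℂ) 1) 0 := by
    intro w hw
    simp only [Set.mem_setOf_eq, Function.comp_apply, hH, norm_div]
    rw [eval_Pk_zero, eval_Gk_zero]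
    simp only [norm_one, norm_neg, Complex.norm_real, Real.norm_eq_abs, div_one, h]
    have hQw := hQ w (habs w hw)
    rw [← hθ, h, div_le_one (norm_pos_iff.mpr hQw)]
    exact hmm w (habs w hw)
  have hdiff : DifferentiableOn ℂ H (ball (0:ℂ) 1) :=
    (G.differentiable.differentiableOn).div (Q.differentiable.differentiableOn)
      (fun w hw => hQ w (habs w hw))
  have heqOn := Complex.eqOn_of_isPreconnected_of_isMaxOn_norm
    (convex_ball (0:ℂ) 1).isPreconnected isOpen_ball hdiff (by simp) hmax
  have hH0 : H 0 = -(θ:ℂ) := by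
    simp only [hH]
    rw [eval_Pk_zero, eval_Gk_zero, div_one]
  -- so G = -θ • Q as polynomials
  have hpoly : G = C (-(θ:ℂ)) * Q := by
    apply Polynomial.eq_of_infinite_eval_eq
    apply Set.Infinite.mono (s := ball (0:ℂ) 1) _ ball_infinite
    intro w hw
    have hw2 : H w = -(θ:ℂ) := by rw [heqOn hw, Function.const_apply, hH0]
    simp only [hH] at hw2
    have hQw := hQ w (habs w hw)
    simp only [Set.mem_setOf_eq, eval_mul, eval_C]
    rw [← hw2, div_mul_cancel₀ _ hQw]
  -- evaluate at 1 : θ = -1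
  have hQ1 : Q.eval 1 ≠ 0 := hQ 1 (by simp)
  have h1 : (1 + (θ:ℂ)) * Q.eval 1 = 0 := by
    have := eval_one_eq (k+1) b
    rw [← hQdef, ← hGdef] at this
    have h2 : Q.eval 1 = -(θ:ℂ) * Q.eval 1 := by
      conv_lhs => rw [← this, hpoly]
      simp
    linear_combination h2
  have hθ1 : (θ:ℂ) = -1 := by
    rcases mul_eq_zero.mp h1 with h2 | h2
    · linear_combination h2
    · exact absurd h2 hQ1
  have hθ1' : θ = -1 := by exact_mod_cast hθ1
  -- then G = Q, and via FTA a root of Q inside the disc: contradiction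
  have hGQ : G = Q := by
    rw [hpoly, hθ1]
    simp
  have hdeg : 0 < Q.degree := by
    have hc : Q.coeff (k+1) ≠ 0 := by
      rw [hQdef, coeff_Pk_top, ← hθ, hθ1']
      simp
    have := Polynomial.le_natDegree_of_ne_zero hc
    have h2 : 0 < Q.natDegree := by omega
    exact Polynomial.natDegree_pos_iff_degree_pos.mp h2
  obtain ⟨w, hw⟩ := Complex.exists_root hdeg
  have hw1 : 1 < ‖w‖ := by
    by_contra hcon
    exact hQ w (le_of_not_gt hcon) hw
  have hwne : w ≠ 0 := by
    intro h'
    rw [h'] at hw1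
    simp only [norm_zero] at hw1
    linarith
  -- G(w⁻¹) = w⁻¹^(k+1) Q(w) = 0 but |w⁻¹| < 1
  have hGinv : G.eval w⁻¹ = 0 := by
    have hinvne : (w⁻¹ : ℂ) ≠ 0 := inv_ne_zero hwne
    have := eval_Gk_eq (k+1) b (z := w⁻¹) hinvne
    rw [← hGdef, inv_inv, ← hQdef] at this
    rw [this, hw.eq_zero, mul_zero]
  have habsinv : ‖w⁻¹‖ ≤ 1 := by
    rw [norm_inv]
    exact le_of_lt (by rw [inv_lt_one_iff₀]; right; exact hw1)
  rw [hGQ] at hGinv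
  exact hQ w⁻¹ habsinv hGinv

lemma nonzero_infinite : {z : ℂ | z ≠ 0}.Infinite := by
  have : ({0}ᶜ : Set ℂ) = {z : ℂ | z ≠ 0} := by ext z; simp
  rw [← this]
  exact (Set.finite_singleton 0).infinite_compl

/-- The reversed one-step identity. -/
lemma identityB (k : ℕ) (r b : ℕ → ℝ) (θ : ℝ)
    (hA : Pk (k+1) b = Pk k r - C (θ:ℂ) * X * Gk k r) :
    Gk (k+1) b = X * Gk k r - C (θ:ℂ) * Pk k r := by
  apply Polynomial.eq_of_infinite_eval_eq
  apply Set.Infinite.mono _ nonzero_infinite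
  intro z hz
  rw [Set.mem_setOf_eq] at hz
  have hzi : (z⁻¹ : ℂ) ≠ 0 := inv_ne_zero hz
  have e1 := eval_Gk_eq (k+1) b hz
  have e2 := eval_Gk_eq k r hzi
  rw [inv_inv] at e2
  have e3 := eval_Gk_eq k r hz
  rw [Set.mem_setOf_eq, e1, hA]
  simp only [eval_sub, eval_mul, eval_C, eval_X]
  rw [e2, e3]
  have hzk : z ^ (k+1) * (z⁻¹ * (z⁻¹) ^ k) = 1 := by
    rw [← pow_succ']
    rw [inv_pow]
    exact mul_inv_cancel₀ (pow_ne_zero _ hz)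
  have expand : z ^ (k + 1) * (eval z⁻¹ (Pk k r) - ↑θ * z⁻¹ * (z⁻¹ ^ k * eval z (Pk k r)))
      = z ^ (k+1) * eval z⁻¹ (Pk k r)
        - (z ^ (k+1) * (z⁻¹ * z⁻¹ ^ k)) * (↑θ * eval z (Pk k r)) := by ring
  rw [expand, hzk, one_mul, pow_succ]
  ring

/-- Reverse step: from a non-vanishing row of length `k+1`, produce the previous row. -/
lemma step_rev (k : ℕ) (b : ℕ → ℝ) (hQ : nonV (k+1) b) :
    ∃ r : ℕ → ℝ, nonV k r ∧
      (∀ i, 1 ≤ i → i ≤ k → b i = r i - b (k+1) * r (k + 1 - i)) := by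
  set θ := b (k+1) with hθdef
  have hθ := diag_lt_one k b hQ
  rw [← hθdef] at hθ
  have hθ2 : θ^2 < 1 := by nlinarith [abs_nonneg θ, sq_abs θ]
  have h1 : (1:ℝ) - θ^2 ≠ 0 := by nlinarith
  set r : ℕ → ℝ := fun i => (b i + θ * b (k+1-i))/(1-θ^2) with hrdef
  have hb : ∀ i, 1 ≤ i → i ≤ k → b i = r i - θ * r (k + 1 - i) := by
    intro i hi1 hik
    have e : k + 1 - (k + 1 - i) = i := by omega
    simp only [hrdef, e]
    field_simp
    ring
  have hA : Pk (k+1) b = Pk k r - C (θ:ℂ) * X * Gk k r :=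
    step_identity k r b θ hb rfl
  have hB := identityB k r b θ hA
  refine ⟨r, ?_, hb⟩
  intro z hz h0
  have hQz := hQ z hz
  have hGP := maxmod (Pk (k+1) b) (Gk (k+1) b) hQ
    (fun w hw => abs_eval_Gk (k+1) b hw) z hz
  have eQ : (Pk (k+1) b).eval z = -(θ:ℂ) * z * (Gk k r).eval z := by
    rw [hA]
    simp only [eval_sub, eval_mul, eval_C, eval_X]
    rw [h0]
    ring
  have eG : (Gk (k+1) b).eval z = z * (Gk k r).eval z := by
    rw [hB]
    simp only [eval_sub, eval_mul, eval_C, eval_X]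
    rw [h0]
    ring
  have key : (Pk (k+1) b).eval z = -(θ:ℂ) * (Gk (k+1) b).eval z := by
    rw [eQ, eG]; ring
  have hlt : ‖(Pk (k+1) b).eval z‖ < ‖(Pk (k+1) b).eval z‖ := by
    calc ‖(Pk (k+1) b).eval z‖
        = |θ| * ‖(Gk (k+1) b).eval z‖ := by
          rw [key]; simp [norm_mul, Complex.norm_real]
      _ ≤ |θ| * ‖(Pk (k+1) b).eval z‖ :=
          mul_le_mul_of_nonneg_left hGP (abs_nonneg θ)
      _ < 1 * ‖(Pk (k+1) b).eval z‖ :=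
          mul_lt_mul_of_pos_right hθ (norm_pos_iff.mpr hQz)
      _ = _ := one_mul _
  exact lt_irrefl _ hlt

lemma fwdRow_succ (ζ : ℕ → ℝ) (k i : ℕ) :
    fwdRow ζ (k+1) i =
      if i = k + 1 then ζ (k + 1)
      else fwdRow ζ k i - ζ (k + 1) * fwdRow ζ k (k + 1 - i) := rfl

lemma fwdRow_congr (ζ ζ' : ℕ → ℝ) (k : ℕ) (h : ∀ j, 1 ≤ j → j ≤ k → ζ j = ζ' j) :
    ∀ i, fwdRow ζ k i = fwdRow ζ' k i := by
  induction k with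
  | zero => intro i; rfl
  | succ k ih =>
    intro i
    have hk1 : ζ (k+1) = ζ' (k+1) := h (k+1) (by omega) (le_refl _)
    have ih' := fun i => ih (fun j h1 h2 => h j h1 (by omega)) i
    rw [fwdRow_succ, fwdRow_succ, hk1, ih' i, ih' (k+1-i)]

/-- Forward direction: the image of the open cube rows is non-vanishing. -/
lemma fwd_nonV (ζ : ℕ → ℝ) (k : ℕ) (hζ : ∀ j, 1 ≤ j → j ≤ k → |ζ j| < 1) :
    nonV k (fwdRow ζ k) := by
  induction k with
  | zero =>
    intro z hz h0
    rw [eval_Pk] at h0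
    simp at h0
  | succ k ih =>
    have ih' := ih (fun j h1 h2 => hζ j h1 (by omega))
    refine step_fwd k (fwdRow ζ k) (fwdRow ζ (k+1)) (ζ (k+1)) (hζ (k+1) (by omega) le_rfl)
      ?_ ?_ ih'
    · intro i hi1 hik
      rw [fwdRow_succ, if_neg (by omega)]
    · rw [fwdRow_succ, if_pos rfl]

/-- Reverse direction: every non-vanishing row is a forward image of a cube point. -/
lemma surj (k : ℕ) : ∀ b : ℕ → ℝ, nonV k b →
    ∃ ζ : ℕ → ℝ, (∀ j, 1 ≤ j → j ≤ k → |ζ j| < 1) ∧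
      (∀ i, 1 ≤ i → i ≤ k → fwdRow ζ k i = b i) := by
  induction k with
  | zero =>
    intro b _
    exact ⟨fun _ => 0, fun j h1 h2 => by omega, fun i h1 h2 => by omega⟩
  | succ k ih =>
    intro b hb
    obtain ⟨r, hrnonV, hrb⟩ := step_rev k b hb
    obtain ⟨ζ, hζ1, hζ2⟩ := ih r hrnonV
    have hθ := diag_lt_one k b hb
    refine ⟨Function.update ζ (k+1) (b (k+1)), ?_, ?_⟩
    · intro j h1 h2
      rcases eq_or_ne j (k+1) with h | h
      · rw [h, Function.update_self]; exact hθ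
      · rw [Function.update_of_ne h]; exact hζ1 j h1 (by omega)
    · have hcongr : ∀ i, fwdRow (Function.update ζ (k+1) (b (k+1))) k i = fwdRow ζ k i := by
        apply fwdRow_congr
        intro j h1 h2
        rw [Function.update_of_ne (by omega)]
      intro i h1 h2
      rw [fwdRow_succ]
      rcases eq_or_ne i (k+1) with h | h
      · rw [if_pos h, Function.update_self, h]
      · rw [if_neg h, Function.update_self, hcongr i, hcongr (k+1-i),
          hζ2 i h1 (by omega), hζ2 (k+1-i) (by omega) (by omega),
          ← hrb i h1 (by omega)]

lemma toSeq_apply {q : ℕ} (θ : Fin q → ℝ) (i : Fin q) : toSeq θ (i.1 + 1) = θ i := by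
  unfold toSeq
  rw [dif_pos (by omega : i.1 + 1 - 1 < q)]
  have e : (⟨i.1 + 1 - 1, by omega⟩ : Fin q) = i := Fin.ext (by simp)
  rw [e]

lemma eval_Pk_toSeq {q : ℕ} (θ : Fin q → ℝ) (z : ℂ) :
    (Pk q (toSeq θ)).eval z = 1 - ∑ i : Fin q, (θ i : ℂ) * z ^ (i.1 + 1) := by
  rw [eval_Pk]
  congr 1
  rw [← Fin.sum_univ_eq_sum_range (fun i => ((toSeq θ (i+1) : ℝ) : ℂ) * z ^ (i+1)) q]
  refine Finset.sum_congr rfl fun i _ => ?_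
  rw [toSeq_apply]

lemma mem_invRegion_iff {q : ℕ} (θ : Fin q → ℝ) :
    θ ∈ invRegion q ↔ nonV q (toSeq θ) := by
  constructor
  · intro h z hz h0
    rw [eval_Pk_toSeq] at h0
    exact absurd hz (not_le_of_gt (h z h0))
  · intro h z h0
    by_contra hcon
    exact h z (le_of_not_gt hcon) (by rw [eval_Pk_toSeq]; exact h0)

lemma Pk_congr (k : ℕ) (a a' : ℕ → ℝ) (h : ∀ i, 1 ≤ i → i ≤ k → a i = a' i) :
    Pk k a = Pk k a' := by
  unfold Pk
  congr 1
  refine Finset.sum_congr rfl fun i hi => ?_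
  rw [Finset.mem_range] at hi
  rw [h (i+1) (by omega) (by omega)]

lemma toSeq_Bmap {q : ℕ} (ζ : Fin q → ℝ) (j : ℕ) (h1 : 1 ≤ j) (h2 : j ≤ q) :
    toSeq (Bmap ζ) j = fwdRow (toSeq ζ) q j := by
  unfold toSeq Bmap
  rw [dif_pos (by omega : j - 1 < q)]
  show fwdRow (toSeq ζ) q (j - 1 + 1) = fwdRow (toSeq ζ) q j
  congr 1
  omega

/-- `B` maps the open cube into the invertible region. -/
lemma Bmap_mem_invRegion {q : ℕ} (ζ : Fin q → ℝ) (hζ : ζ ∈ openCube q) :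
    Bmap ζ ∈ invRegion q := by
  rw [mem_invRegion_iff]
  have h1 : Pk q (toSeq (Bmap ζ)) = Pk q (fwdRow (toSeq ζ) q) :=
    Pk_congr q _ _ (fun i hi1 hi2 => toSeq_Bmap ζ i hi1 hi2)
  unfold nonV
  rw [h1]
  apply fwd_nonV
  intro j hj1 hj2
  have := hζ ⟨j - 1, by omega⟩
  rw [Set.mem_Ioo] at this
  have e : toSeq ζ j = ζ ⟨j-1, by omega⟩ := by
    unfold toSeq
    rw [dif_pos (by omega : j - 1 < q)]
  rw [e, abs_lt]
  exact this

/-- Every point of the invertible region is the image of a cube point. -/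
lemma invRegion_subset_image {q : ℕ} :
    invRegion q ⊆ Bmap '' openCube q := by
  intro θ hθ
  rw [mem_invRegion_iff] at hθ
  obtain ⟨ζs, hζ1, hζ2⟩ := surj q (toSeq θ) hθ
  refine ⟨fun i => ζs (i.1 + 1), ?_, ?_⟩
  · intro i
    rw [Set.mem_Ioo, ← abs_lt]
    exact hζ1 (i.1+1) (by omega) (by omega)
  · funext i
    unfold Bmap
    have hc : ∀ j, fwdRow (toSeq fun i : Fin q => ζs (i.1+1)) q j = fwdRow ζs q j := by
      apply fwdRow_congr
      intro j h1 h2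
      unfold toSeq
      rw [dif_pos (by omega : j - 1 < q)]
      show ζs (j - 1 + 1) = ζs j
      congr 1
      omega
    rw [hc, hζ2 (i.1+1) (by omega) (by omega), toSeq_apply]

/-- The invertible region is open. -/
lemma isOpen_invRegion (q : ℕ) : IsOpen (invRegion q) := by
  rw [Metric.isOpen_iff]
  intro θ hθ
  rw [mem_invRegion_iff] at hθ
  have hcomp : IsCompact (closedBall (0:ℂ) 1) := isCompact_closedBall _ _
  have hcont : ContinuousOn (fun z => ‖(Pk q (toSeq θ)).eval z‖)
      (closedBall (0:ℂ) 1) :=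
    (continuous_norm.comp (Pk q (toSeq θ)).continuous).continuousOn
  obtain ⟨z₀, hz₀mem, hz₀min⟩ := hcomp.exists_isMinOn ⟨0, by simp⟩ hcont
  set m := ‖(Pk q (toSeq θ)).eval z₀‖ with hm_def
  have hm : 0 < m := by
    apply norm_pos_iff.mpr
    apply hθ
    simpa [Complex.dist_eq] using hz₀mem
  refine ⟨m / (q + 1), by positivity, ?_⟩
  intro θ' hθ'
  rw [Metric.mem_ball] at hθ'
  rw [mem_invRegion_iff]
  intro z hz h0
  have hzmem : z ∈ closedBall (0:ℂ) 1 := by simpa [Complex.dist_eq] using hz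
  have hmle : m ≤ ‖(Pk q (toSeq θ)).eval z‖ := hz₀min hzmem
  have hdist : ∀ i : Fin q, |θ' i - θ i| < m / (q+1) := by
    intro i
    have := dist_le_pi_dist θ' θ i
    rw [Real.dist_eq] at this
    linarith [lt_of_le_of_lt this hθ']
  have hsum : (Pk q (toSeq θ)).eval z
      = ∑ i : Fin q, ((θ' i - θ i : ℝ) : ℂ) * z ^ (i.1+1) := by
    have e1 := eval_Pk_toSeq θ z
    have e2 := eval_Pk_toSeq θ' z
    rw [h0] at e2
    have e4 : ∑ i : Fin q, (θ' i : ℂ) * z ^ (i.1+1) = 1 := by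
      linear_combination e2
    rw [e1, ← e4, ← Finset.sum_sub_distrib]
    exact Finset.sum_congr rfl (fun i _ => by push_cast; ring)
  have habs : ‖(Pk q (toSeq θ)).eval z‖ ≤ q * (m / (q+1)) := by
    rw [hsum]
    calc ‖∑ i : Fin q, ((θ' i - θ i : ℝ) : ℂ) * z ^ (i.1+1)‖
        ≤ ∑ i : Fin q, ‖((θ' i - θ i : ℝ) : ℂ) * z ^ (i.1+1)‖ :=
          norm_sum_le _ _
      _ ≤ ∑ _i : Fin q, m / (q+1) := by
          apply Finset.sum_le_sum
          intro i _
          rw [norm_mul, norm_pow, Complex.norm_real, Real.norm_eq_abs]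
          calc |θ' i - θ i| * ‖z‖ ^ (i.1+1)
              ≤ |θ' i - θ i| * 1 := by
                apply mul_le_mul_of_nonneg_left _ (abs_nonneg _)
                exact pow_le_one₀ (norm_nonneg _) hz
            _ ≤ m / (q+1) := by rw [mul_one]; exact le_of_lt (hdist i)
      _ = q * (m / (q+1)) := by
          rw [Finset.sum_const, Finset.card_univ, Fintype.card_fin, nsmul_eq_mul]
  have : m ≤ q * (m / (q+1)) := le_trans hmle habs
  have hq1 : q * (m / (q+1)) < m := by
    rw [mul_div_assoc']
    rw [div_lt_iff₀ (by positivity)]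
    nlinarith [Nat.cast_nonneg (α := ℝ) q]
  linarith

lemma continuous_toSeq (q : ℕ) (n : ℕ) : Continuous fun ζ : Fin q → ℝ => toSeq ζ n := by
  unfold toSeq
  by_cases h : n - 1 < q
  · simp only [dif_pos h]
    exact continuous_apply _
  · simp only [dif_neg h]
    exact continuous_const

lemma continuous_fwdRow (q k : ℕ) :
    ∀ i, Continuous fun ζ : Fin q → ℝ => fwdRow (toSeq ζ) k i := by
  induction k with
  | zero => intro i; exact continuous_const
  | succ k ih =>
    intro i
    have e : (fun ζ : Fin q → ℝ => fwdRow (toSeq ζ) (k+1) i)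
        = fun ζ => if i = k + 1 then toSeq ζ (k+1)
          else fwdRow (toSeq ζ) k i - toSeq ζ (k+1) * fwdRow (toSeq ζ) k (k+1-i) := by
      funext ζ; rw [fwdRow_succ]
    rw [e]
    by_cases h : i = k + 1
    · simp only [if_pos h]
      exact continuous_toSeq q (k+1)
    · simp only [if_neg h]
      exact (ih i).sub ((continuous_toSeq q (k+1)).mul (ih (k+1-i)))

lemma continuous_Bmap (q : ℕ) : Continuous (Bmap (q := q)) :=
  continuous_pi fun i => continuous_fwdRow q q (i.1+1)

lemma openCube_eq (q : ℕ) :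
    openCube q = Set.pi Set.univ (fun _ : Fin q => Set.Ioo (-1:ℝ) 1) := by
  ext ζ
  simp [openCube, Set.mem_pi]

end BNS

/-- For `q ≥ 1`, every point of the frontier of the invertible region is the image under
`B` of a point of the frontier of the open unit cube: `∂D_θ ⊆ B(∂D_ζ)`. -/
theorem frontier_subset_image {q : ℕ} (hq : 1 ≤ q) :
    frontier (invRegion q) ⊆ Bmap '' frontier (openCube q) := by
  classical
  intro θ hθ
  set cl : Set (Fin q → ℝ) := Set.pi Set.univ (fun _ : Fin q => Set.Icc (-1:ℝ) 1) with hcl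
  have hsubcl : openCube q ⊆ cl := by
    rw [BNS.openCube_eq]
    intro ζ hζ i hi
    exact Set.Ioo_subset_Icc_self (hζ i hi)
  have hclcomp : IsCompact cl := isCompact_univ_pi fun _ => isCompact_Icc
  have himcomp : IsCompact (Bmap '' cl) := hclcomp.image (BNS.continuous_Bmap q)
  have hinv_sub : invRegion q ⊆ Bmap '' cl :=
    BNS.invRegion_subset_image.trans (Set.image_mono hsubcl)
  have hclosure : closure (invRegion q) ⊆ Bmap '' cl :=
    closure_minimal hinv_sub himcomp.isClosed
  obtain ⟨ζ, hζcl, hζB⟩ := hclosure (frontier_subset_closure hθ)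
  have hζnot : ζ ∉ openCube q := by
    intro hcon
    have h1 : θ ∈ invRegion q := hζB ▸ BNS.Bmap_mem_invRegion ζ hcon
    have h2 : θ ∈ interior (invRegion q) := by
      rw [(BNS.isOpen_invRegion q).interior_eq]
      exact h1
    exact hθ.2 h2
  refine ⟨ζ, ?_, hζB⟩
  rw [frontier, BNS.openCube_eq, (isOpen_set_pi Set.finite_univ
    (fun i _ => isOpen_Ioo)).interior_eq, closure_pi_set]
  constructor
  · intro i hi
    rw [closure_Ioo (by norm_num : (-1:ℝ) ≠ 1)]
    exact hζcl i hi
  · rw [← BNS.openCube_eq]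
    exact hζnot
end

section
/- Let X and Y be metric spaces, let D ⊆ X be an open set whose closure is compact, and let f : X → Y be continuous on the closure of D. Suppose f restricted to D is injective, its image E = f(D) is open in Y, and the inverse map E → D is continuous. Then f(closure D) = closure E and f(∂D) = ∂E, where ∂ denotes the topological frontier. -/
/-- Abstract topological content of the paper's Theorem 1: if `X`, `Y` are metric spaces,
`D ⊆ X` is open with compact closure, `f` is continuous on `closure D`, `f` restricted to
`D` is injective with open image `E = f '' D`, and the inverse map `E → D` (given by a
function `g` continuous on `E` with `g (f x) = x` on `D`) is continuous, then
`f (closure D) = closure E` and `f (∂D) = ∂E`. -/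
theorem image_closure_and_frontier {X Y : Type*} [MetricSpace X] [MetricSpace Y]
    (D : Set X) (hD : IsOpen D) (hcomp : IsCompact (closure D))
    (f : X → Y) (hf : ContinuousOn f (closure D)) (hinj : Set.InjOn f D)
    (E : Set Y) (hE : E = f '' D) (hEopen : IsOpen E)
    (g : Y → X) (hg : ContinuousOn g E) (hgf : ∀ x ∈ D, g (f x) = x) :
    f '' closure D = closure E ∧ f '' frontier D = frontier E := by
  have hclos : f '' closure D = closure E := by
    apply Set.Subset.antisymm
    · rw [hE]
      exact hf.image_closure
    · have : IsClosed (f '' closure D) := (hcomp.image_of_continuousOn hf).isClosed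
      exact closure_minimal (by rw [hE]; exact Set.image_mono (f := f) subset_closure) this
  refine ⟨hclos, ?_⟩
  have hfrD : frontier D = closure D \ D := hD.frontier_eq
  have hfrE : frontier E = closure E \ E := hEopen.frontier_eq
  -- key: if x ∈ closure D \ D then f x ∉ E
  have key : ∀ x ∈ closure D, x ∉ D → f x ∉ E := by
    intro x hx hxD hfxE
    obtain ⟨d, hd, hdf⟩ : f x ∈ f '' D := by rwa [hE] at hfxE
    obtain ⟨u, hu, hulim⟩ := mem_closure_iff_seq_limit.mp hx
    have hulim' : Filter.Tendsto u Filter.atTop (nhdsWithin x (closure D)) := by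
      rw [tendsto_nhdsWithin_iff]
      exact ⟨hulim, Filter.Eventually.of_forall fun n => subset_closure (hu n)⟩
    have hfu : Filter.Tendsto (fun n => f (u n)) Filter.atTop (nhds (f x)) :=
      ((hf x hx).tendsto).comp hulim'
    have hgc : ContinuousAt g (f x) :=
      (hg (f x) hfxE).continuousAt (hEopen.mem_nhds hfxE)
    have hgfu : Filter.Tendsto (fun n => g (f (u n))) Filter.atTop (nhds (g (f x))) :=
      hgc.tendsto.comp hfu
    have heq : (fun n => g (f (u n))) = u := funext fun n => hgf (u n) (hu n)
    rw [heq] at hgfu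
    have : x = g (f x) := tendsto_nhds_unique hulim hgfu
    rw [← hdf, hgf d hd] at this
    exact hxD (this ▸ hd)
  rw [hfrD, hfrE]
  apply Set.Subset.antisymm
  · rintro _ ⟨x, ⟨hx, hxD⟩, rfl⟩
    exact ⟨hclos ▸ Set.mem_image_of_mem f hx, key x hx hxD⟩
  · rintro y ⟨hy, hyE⟩
    obtain ⟨x, hx, rfl⟩ := hclos.symm ▸ hy
    have hxD : x ∉ D := fun h => hyE (hE ▸ Set.mem_image_of_mem f h)
    exact ⟨x, ⟨hx, hxD⟩, rfl⟩
end

section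
/- Let q ≥ 1. The invertible region D_θ is an open subset of ℝ^q. -/
set_option maxHeartbeats 1000000 in
/-- For `q ≥ 1`, the invertible region `D_θ` is an open subset of `ℝ^q`. -/
theorem invRegion_isOpen {q : ℕ} (hq : 1 ≤ q) :
    IsOpen (invRegion q) := by
  have hset : invRegion q =
      {θ : Fin q → ℝ | ∀ z ∈ Metric.closedBall (0:ℂ) 1,
        1 - ∑ i : Fin q, (θ i : ℂ) * z ^ (i.1 + 1) ≠ 0} := by
    ext θ
    simp only [invRegion, Set.mem_setOf_eq, Metric.mem_closedBall, dist_zero_right]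
    constructor
    · intro h z hz hz0
      exact absurd (h z hz0) (not_lt.mpr hz)
    · intro h z hz0
      by_contra hle
      exact h z (not_lt.mp hle) hz0
  rw [hset, isOpen_iff_mem_nhds]
  intro θ hθ
  have hK : IsCompact (Metric.closedBall (0:ℂ) 1) := isCompact_closedBall _ _
  have hcont : Continuous fun p : (Fin q → ℝ) × ℂ =>
      1 - ∑ i : Fin q, ((p.1 i : ℂ)) * p.2 ^ (i.1 + 1) := by
    refine continuous_const.sub (continuous_finset_sum _ fun i _ => ?_)
    exact ((Complex.continuous_ofReal.comp ((continuous_apply i).comp continuous_fst)).mul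
      (continuous_snd.pow _))
  have hev : ∀ᶠ θ' in nhds θ, ∀ z ∈ Metric.closedBall (0:ℂ) 1,
      1 - ∑ i : Fin q, ((θ' i : ℂ)) * z ^ (i.1 + 1) ≠ 0 := by
    refine hK.eventually_forall_of_forall_eventually fun z hz => ?_
    exact hcont.continuousAt.eventually_ne (hθ z hz)
  exact hev
end

section
/- Let q ≥ 1. The closure of the invertible region D_θ is a compact subset of ℝ^q; in particular, D_θ is bounded. -/
open Polynomial Multiset

lemma choose_le_two_pow' (n m : ℕ) : n.choose m ≤ 2 ^ n := by
  rcases le_or_gt m n with h | h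
  · calc n.choose m ≤ ∑ j ∈ Finset.range (n+1), n.choose j :=
        Finset.single_le_sum (fun j _ => Nat.zero_le _) (Finset.mem_range.2 (by omega))
      _ = 2 ^ n := Nat.sum_range_choose n
  · rw [Nat.choose_eq_zero_of_lt h]; positivity

lemma coeff_bound {q : ℕ} (θ : Fin q → ℝ)
    (hθ : ∀ z : ℂ, 1 - ∑ i : Fin q, (θ i : ℂ) * z ^ (i.1 + 1) = 0 → 1 < ‖z‖)
    (i : Fin q) : |θ i| ≤ 2 ^ q := by
  set P : ℂ[X] := C 1 - ∑ j : Fin q, C ((θ j : ℂ)) * X ^ (j.1 + 1) with hP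
  have heval : ∀ z : ℂ, P.eval z = 1 - ∑ j : Fin q, (θ j : ℂ) * z ^ (j.1 + 1) := by
    intro z; simp [hP, eval_finset_sum]
  have hc0 : P.coeff 0 = 1 := by
    simp [hP, finset_sum_coeff, coeff_X_pow, Nat.succ_ne_zero]
  have hck : ∀ j : Fin q, P.coeff (j.1 + 1) = -(θ j : ℂ) := by
    intro j
    simp only [hP, coeff_sub, finset_sum_coeff, coeff_C_mul, coeff_X_pow]
    rw [coeff_C]
    simp only [Nat.succ_ne_zero, if_false, zero_sub, neg_inj]
    rw [Finset.sum_eq_single j]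
    · simp
    · intro b _ hb
      have hne : (j.1 : ℕ) ≠ b.1 := fun h => hb (Fin.ext h.symm)
      simp [hne]
    · simp
  have hP0 : P ≠ 0 := fun h => by simp [h] at hc0
  have hdeg : P.natDegree ≤ q := by
    apply natDegree_le_iff_coeff_eq_zero.mpr
    intro k hk
    simp only [hP, coeff_sub, finset_sum_coeff, coeff_C_mul, coeff_X_pow]
    rw [coeff_C, if_neg (by omega)]
    rw [Finset.sum_eq_zero, sub_zero]
    intro b _
    rw [if_neg (by omega), mul_zero]
  set n := P.natDegree
  have hsplit : P.Splits := IsAlgClosed.splits P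
  have hroots : Multiset.card P.roots = n := splits_iff_card_roots.1 hsplit
  have hroot1 : ∀ r ∈ P.roots, 1 < ‖r‖ := by
    intro r hr
    exact hθ r (by rw [← heval]; exact (isRoot_of_mem_roots hr))
  set A : ℝ := (P.roots.map (‖·‖)).prod with hA
  have hA1 : 1 ≤ A := Multiset.one_le_prod (by
    intro a ha
    obtain ⟨r, hr, rfl⟩ := Multiset.mem_map.1 ha
    exact (hroot1 r hr).le)
  have habs : ∀ s : Multiset ℂ, ‖s.prod‖ = (s.map (‖·‖)).prod :=
    fun s => map_multiset_prod (normHom : ℂ →*₀ ℝ) s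
  have hfact := C_leadingCoeff_mul_prod_multiset_X_sub_C hroots
  have hprod : ‖P.leadingCoeff‖ * A = 1 := by
    have h1 := congrArg (fun p : ℂ[X] => ‖Polynomial.eval 0 p‖) hfact
    simp only [eval_mul, eval_C, eval_multiset_prod, Multiset.map_map, norm_mul] at h1
    rw [heval 0, habs, Multiset.map_map] at h1
    have h2 : (P.roots.map ((‖·‖) ∘ Polynomial.eval 0 ∘ fun a => X - C a))
        = P.roots.map (‖·‖) :=
      Multiset.map_congr rfl (by intro r _; simp [norm_neg])
    rw [h2] at h1
    simpa using h1
  have hsub : ∀ m : ℕ, ∀ s ∈ P.roots.powersetCard m, ‖s.prod‖ ≤ A := by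
    intro m s hs
    have hle : s ≤ P.roots := (Multiset.mem_powersetCard.1 hs).1
    obtain ⟨u, hu⟩ := Multiset.le_iff_exists_add.1 hle
    rw [habs]
    have hAeq : A = (s.map (‖·‖)).prod * (u.map (‖·‖)).prod := by
      rw [hA, hu, Multiset.map_add, Multiset.prod_add]
    rw [hAeq]
    refine le_mul_of_one_le_right ?_ ?_
    · exact Multiset.prod_nonneg (by
        intro a ha; obtain ⟨r, _, rfl⟩ := Multiset.mem_map.1 ha; exact (norm_nonneg r))
    · exact Multiset.one_le_prod (by
        intro a ha; obtain ⟨r, hr, rfl⟩ := Multiset.mem_map.1 ha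
        exact (hroot1 r (by rw [hu]; exact Multiset.mem_add.2 (Or.inr hr))).le)
  have hcoeff : ∀ k : ℕ, ‖P.coeff k‖ ≤ 2 ^ q := by
    intro k
    rcases lt_or_ge n k with hk | hk
    · rw [coeff_eq_zero_of_natDegree_lt hk]
      simp
    · rw [coeff_eq_esymm_roots_of_splits hsplit hk]
      rw [norm_mul, norm_mul, norm_pow]
      simp only [norm_neg, norm_one, one_pow, mul_one]
      have hesymm : ‖P.roots.esymm (n - k)‖ ≤ (n.choose (n-k) : ℝ) * A := by
        rw [Multiset.esymm]
        have h1 : ‖((P.roots.powersetCard (n-k)).map Multiset.prod).sum‖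
            ≤ ((((P.roots.powersetCard (n-k)).map Multiset.prod)).map (‖·‖)).sum := by
          simpa using
            norm_multiset_sum_le ((P.roots.powersetCard (n-k)).map Multiset.prod)
        refine h1.trans ?_
        rw [Multiset.map_map]
        have h2 := Multiset.sum_le_card_nsmul
          ((P.roots.powersetCard (n-k)).map ((‖·‖) ∘ Multiset.prod)) A ?_
        · refine h2.trans ?_
          rw [Multiset.card_map, Multiset.card_powersetCard, hroots, nsmul_eq_mul]
        · intro x hx
          obtain ⟨s, hs, rfl⟩ := Multiset.mem_map.1 hx
          exact hsub (n-k) s hs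
      calc ‖P.leadingCoeff‖ * ‖P.roots.esymm (n - k)‖
          ≤ ‖P.leadingCoeff‖ * ((n.choose (n-k) : ℝ) * A) :=
            mul_le_mul_of_nonneg_left hesymm (norm_nonneg _)
        _ = (n.choose (n-k) : ℝ) * (‖P.leadingCoeff‖ * A) := by ring
        _ = (n.choose (n-k) : ℝ) := by rw [hprod, mul_one]
        _ ≤ 2 ^ q := by
            have h3 : n.choose (n-k) ≤ 2 ^ q :=
              (choose_le_two_pow' n (n-k)).trans (Nat.pow_le_pow_right (by norm_num) hdeg)
            exact_mod_cast h3
  have hfin := hcoeff (i.1 + 1)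
  rw [hck i] at hfin
  simpa using hfin

/-- For `q ≥ 1`, the closure of the invertible region is compact; in particular the
invertible region is bounded. -/
theorem closure_invRegion_isCompact {q : ℕ} (hq : 1 ≤ q) :
    IsCompact (closure (invRegion q)) ∧ Bornology.IsBounded (invRegion q) := by
  have hbd : Bornology.IsBounded (invRegion q) := by
    have hsub : invRegion q ⊆ Metric.closedBall 0 (2 ^ q) := by
      intro θ hθ
      rw [Metric.mem_closedBall, dist_pi_le_iff (by positivity)]
      intro i
      rw [Real.dist_eq, Pi.zero_apply, sub_zero]
      exact coeff_bound θ hθ i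
    exact Metric.isBounded_closedBall.subset hsub
  exact ⟨Metric.isCompact_of_isClosed_isBounded isClosed_closure hbd.closure, hbd⟩
end

section
/- Let q ≥ 1 and let ζ = (ζ_1,…,ζ_q) ∈ (−1,1)^q. Then B⁻(B(ζ)) = ζ; that is, the inverse recursion recovers ζ from θ = B(ζ) whenever all |ζ_k| < 1. -/
lemma fwdRow_diag (ζ : ℕ → ℝ) (m : ℕ) : fwdRow ζ (m+1) (m+1) = ζ (m+1) := by
  simp [fwdRow]

lemma fwdRow_lt (ζ : ℕ → ℝ) (m i : ℕ) (h : i ≠ m+1) :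
    fwdRow ζ (m+1) i = fwdRow ζ m i - ζ (m+1) * fwdRow ζ m (m+1-i) := by
  simp [fwdRow, h]

lemma key {q : ℕ} (hq : 1 ≤ q) (ζ : Fin q → ℝ)
    (hζ : ∀ i, ζ i ∈ Set.Ioo (-1:ℝ) 1) (d : ℕ) (hd : d ≤ q - 1) :
    (invAux q (toSeq (Bmap ζ)) d).2 ∧
      ∀ i, 1 ≤ i → i ≤ q - d →
        (invAux q (toSeq (Bmap ζ)) d).1 i = fwdRow (toSeq ζ) (q - d) i := by
  set z := toSeq ζ with hz
  have habs : ∀ j, 1 ≤ j → j ≤ q → |z j| < 1 := by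
    intro j h1 h2
    have hj : j - 1 < q := by omega
    have := hζ ⟨j-1, hj⟩
    rw [hz, toSeq]
    rw [dif_pos hj, abs_lt]
    exact ⟨this.1, this.2⟩
  have hbase : ∀ i, 1 ≤ i → i ≤ q → toSeq (Bmap ζ) i = fwdRow z q i := by
    intro i h1 h2
    have hi : i - 1 < q := by omega
    rw [toSeq, dif_pos hi, Bmap]
    show fwdRow z q (i - 1 + 1) = fwdRow z q i
    congr 1
    omega
  induction d with
  | zero =>
    constructor
    · show |toSeq (Bmap ζ) q| < 1
      rw [hbase q hq le_rfl]
      obtain ⟨m, rfl⟩ : ∃ m, q = m + 1 := ⟨q - 1, by omega⟩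
      rw [fwdRow_diag]
      exact habs _ hq le_rfl
    · intro i h1 h2
      exact hbase i h1 (by omega)
  | succ d ih =>
    obtain ⟨hP, hrow⟩ := ih (by omega)
    obtain ⟨m, hm⟩ : ∃ m, q - d = m + 2 := ⟨q - d - 2, by omega⟩
    have hdiag : (invAux q (toSeq (Bmap ζ)) d).1 (q - d) = z (q - d) := by
      rw [hrow (q - d) (by omega) le_rfl, hm, fwdRow_diag]
    have hpivlt : |z (q - d)| < 1 := habs _ (by omega) (by omega)
    have hne : 1 - (z (q - d)) ^ 2 ≠ 0 := by
      have := abs_lt.mp hpivlt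
      nlinarith
    have hrowval : ∀ i, 1 ≤ i → i ≤ q - (d+1) →
        (invAux q (toSeq (Bmap ζ)) (d+1)).1 i = fwdRow z (q - (d+1)) i := by
      intro i h1 h2
      simp only [invAux]
      rw [if_pos hP, hdiag, hrow i (by omega) (by omega),
        hrow (q - d - i) (by omega) (by omega)]
      have e3 : q - (d+1) = m + 1 := by omega
      rw [e3, hm]
      have e1 : fwdRow z (m+2) i = fwdRow z (m+1) i - z (m+2) * fwdRow z (m+1) (m+2-i) :=
        fwdRow_lt z (m+1) i (by omega)
      have e2 : fwdRow z (m+2) (m+2-i) =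
          fwdRow z (m+1) (m+2-i) - z (m+2) * fwdRow z (m+1) i := by
        have h := fwdRow_lt z (m+1) (m+2-i) (by omega)
        rw [show m+1+1-(m+2-i) = i from by omega] at h
        exact h
      rw [e1, e2]
      have hne' : 1 - (z (m+2)) ^ 2 ≠ 0 := by rw [← hm]; exact hne
      field_simp
      ring
    refine ⟨?_, hrowval⟩
    show (invAux q (toSeq (Bmap ζ)) d).2 ∧
      |(invAux q (toSeq (Bmap ζ)) (d+1)).1 (q - d - 1)| < 1
    refine ⟨hP, ?_⟩
    rw [hrowval (q - d - 1) (by omega) (by omega)]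
    have e4 : q - (d+1) = m + 1 := by omega
    have e5 : q - d - 1 = m + 1 := by omega
    rw [e4, e5, fwdRow_diag]
    exact habs _ (by omega) (by omega)

/-- For `q ≥ 1` and `ζ ∈ (-1,1)^q`, the inverse recursion recovers `ζ` from `B(ζ)`:
`B⁻(B(ζ)) = ζ`. -/
theorem Binv_Bmap {q : ℕ} (hq : 1 ≤ q) (ζ : Fin q → ℝ)
    (hζ : ∀ i, ζ i ∈ Set.Ioo (-1 : ℝ) 1) :
    Binv (Bmap ζ) = ζ := by
  funext i
  have hi := i.2
  have hd : q - (i.1 + 1) ≤ q - 1 := by omega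
  obtain ⟨_, hrow⟩ := key hq ζ hζ (q - (i.1+1)) hd
  have e : q - (q - (i.1+1)) = i.1 + 1 := by omega
  rw [Binv, hrow (i.1+1) (by omega) (by omega), e, fwdRow_diag, toSeq]
  rw [dif_pos (by simp : i.1 + 1 - 1 < q)]
  exact congrArg ζ (Fin.ext (by simp))
end
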